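/- arXiv:1303.0369 — 2 statements merged into one kernel-verified Lean document; each statement's English description precedes it below -/
import Mathlib

section
/- Let G be a finite connected simple graph with n ≥ 3 vertices and m edges. Then C(G) ≤ n(m − n + 1)/2, with equality if and only if G is a tree or G is the complete graph K_n. -/
open Matrix Finset

/-- The Moore–Penrose pseudoinverse of a real square matrix, specified (when it exists)
by the four Penrose conditions. -/
noncomputable def pinv {n : Type*} [Fintype n] [DecidableEq n] (A : Matrix n n ℝ) :
    Matrix n n ℝ :=
  open scoped Classical in
  if h : ∃ B, A * B * A = A ∧ B * A * B = B ∧ (A * B)ᵀ = A * B ∧ (B * A)ᵀ = B * A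
  then h.choose else 0

/-- The resistance distance between two vertices of a graph:
`Ω_G(i,j) = (e_i − e_j)ᵀ L⁺ (e_i − e_j)` where `L⁺` is the Moore–Penrose pseudoinverse
of the Laplacian matrix of `G`. -/
noncomputable def resDist {V : Type*} [Fintype V] [DecidableEq V] (G : SimpleGraph V)
    (i j : V) : ℝ :=
  letI : DecidableRel G.Adj := Classical.decRel _
  (Pi.single i 1 - Pi.single j 1) ⬝ᵥ
    (pinv (G.lapMatrix ℝ)) *ᵥ (Pi.single i 1 - Pi.single j 1)

lemma resDist_comm {V : Type*} [Fintype V] [DecidableEq V] (G : SimpleGraph V) (i j : V) :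
    resDist G i j = resDist G j i := by
  unfold resDist
  rw [show (Pi.single j 1 - Pi.single i 1 : V → ℝ)
        = -(Pi.single i 1 - Pi.single j 1) by rw [neg_sub]]
  rw [Matrix.mulVec_neg, dotProduct_neg, neg_dotProduct, neg_neg]

/-- The global cyclicity index `C(G) = Σ_{ij ∈ E(G)} (1/Ω_G(i,j) − 1)`,
the sum over all edges of `G`. -/
noncomputable def cyclicity {V : Type*} [Fintype V] [DecidableEq V] (G : SimpleGraph V) : ℝ :=
  letI : DecidableRel G.Adj := Classical.decRel _
  ∑ e ∈ G.edgeFinset,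
    Sym2.lift ⟨fun i j => 1 / resDist G i j - 1,
      fun i j => by simp only []; rw [resDist_comm G i j]⟩ e

set_option linter.unusedSectionVars false

section Pinv
variable {n : Type*} [Fintype n] [DecidableEq n]

lemma exists_moorePenrose {A : Matrix n n ℝ} (hA : A.IsHermitian) :
    ∃ B, A * B * A = A ∧ B * A * B = B ∧ (A * B)ᵀ = A * B ∧ (B * A)ᵀ = B * A := by
  classical
  set U : Matrix n n ℝ := (hA.eigenvectorUnitary : Matrix n n ℝ) with hUdef
  have hUU : star U * U = 1 := Unitary.coe_star_mul_self hA.eigenvectorUnitary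
  have hsp : A = U * diagonal (fun i => hA.eigenvalues i) * star U := by
    have := hA.spectral_theorem
    simpa using this
  have hstar : star U = Uᵀ := by
    rw [Matrix.star_eq_conjTranspose, Matrix.conjTranspose_eq_transpose_of_trivial]
  have key : ∀ d1 d2 : n → ℝ, (U * diagonal d1 * star U) * (U * diagonal d2 * star U)
      = U * diagonal (fun k => d1 k * d2 k) * star U := by
    intro d1 d2
    rw [← Matrix.diagonal_mul_diagonal]
    rw [Matrix.mul_assoc (U * diagonal d1) (star U) _]
    rw [show star U * (U * diagonal d2 * star U) = (star U * U) * (diagonal d2 * star U) by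
      simp [Matrix.mul_assoc]]
    rw [hUU, Matrix.one_mul]
    rw [Matrix.mul_assoc U (diagonal d1), ← Matrix.mul_assoc (diagonal d1),
      Matrix.diagonal_mul_diagonal, Matrix.mul_assoc]
  have keyT : ∀ d1 : n → ℝ, (U * diagonal d1 * star U)ᵀ = U * diagonal d1 * star U := by
    intro d1
    rw [hstar, Matrix.transpose_mul, Matrix.transpose_mul, Matrix.transpose_transpose,
      Matrix.diagonal_transpose, Matrix.mul_assoc]
  set g : n → ℝ := fun k => if hA.eigenvalues k = 0 then 0 else (hA.eigenvalues k)⁻¹ with hg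
  have hfun1 : (fun k => hA.eigenvalues k * g k * hA.eigenvalues k) = hA.eigenvalues := by
    funext k
    by_cases h : hA.eigenvalues k = 0 <;> field_simp [hg, h] <;> simp [hg, h]
  have hfun2 : (fun k => g k * hA.eigenvalues k * g k) = g := by
    funext k
    by_cases h : hA.eigenvalues k = 0 <;> field_simp [hg, h] <;> simp [hg, h]
  refine ⟨U * diagonal g * star U, ?_, ?_, ?_, ?_⟩
  · rw [hsp, key, key, hfun1]
  · rw [hsp, key, key, hfun2]
  · rw [hsp, key, keyT]
  · rw [hsp, key, keyT]

lemma pinv_penrose {A : Matrix n n ℝ} (hA : A.IsHermitian) :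
    A * pinv A * A = A ∧ (pinv A * A)ᵀ = pinv A * A ∧ (A * pinv A)ᵀ = A * pinv A := by
  have h := exists_moorePenrose hA
  unfold pinv
  rw [dif_pos h]
  exact ⟨h.choose_spec.1, h.choose_spec.2.2.2, h.choose_spec.2.2.1⟩

end Pinv


section Graph
variable {V : Type*} [Fintype V] [DecidableEq V] (G : SimpleGraph V) [DecidableRel G.Adj]

lemma dart_sum_eq_twice_edge_sum (f : Sym2 V → ℝ) :
    ∑ d : G.Dart, f d.edge = 2 * ∑ e ∈ G.edgeFinset, f e := by
  rw [← Finset.sum_fiberwise_of_maps_to (g := fun d : G.Dart => d.edge) (t := G.edgeFinset)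
    (fun d _ => by rw [SimpleGraph.mem_edgeFinset]; exact d.edge_mem)]
  rw [Finset.mul_sum]
  refine Finset.sum_congr rfl fun e he => ?_
  have hcard : (Finset.univ.filter fun d : G.Dart => d.edge = e).card = 2 :=
    G.dart_edge_fiber_card e (SimpleGraph.mem_edgeFinset.mp he)
  calc ∑ d ∈ Finset.univ.filter (fun d : G.Dart => d.edge = e), f d.edge
      = ∑ d ∈ Finset.univ.filter (fun d : G.Dart => d.edge = e), f e :=
        Finset.sum_congr rfl fun d hd => by rw [(Finset.mem_filter.mp hd).2]
    _ = 2 * f e := by rw [Finset.sum_const, hcard]; simp [mul_comm]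

lemma dart_sum_eq_pair_sum (f : V → V → ℝ) :
    ∑ d : G.Dart, f d.fst d.snd = ∑ i, ∑ j, if G.Adj i j then f i j else 0 := by
  rw [← Finset.sum_product' (s := (Finset.univ : Finset V)) (t := (Finset.univ : Finset V))]
  rw [Finset.univ_product_univ, ← Finset.sum_filter]
  refine Finset.sum_bij (fun d _ => d.toProd) ?_ ?_ ?_ ?_
  · intro d _
    exact Finset.mem_filter.mpr ⟨Finset.mem_univ _, d.adj⟩
  · intro d _ d' _ h
    exact SimpleGraph.Dart.ext _ _ h
  · intro p hp
    exact ⟨⟨p, (Finset.mem_filter.mp hp).2⟩, Finset.mem_univ _, rfl⟩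
  · intro d _
    rfl

lemma edge_sum_lift (f : V → V → ℝ) (hf : ∀ a b, f a b = f b a) :
    2 * ∑ e ∈ G.edgeFinset, Sym2.lift ⟨f, hf⟩ e = ∑ i, ∑ j, if G.Adj i j then f i j else 0 := by
  rw [← dart_sum_eq_twice_edge_sum, ← dart_sum_eq_pair_sum]
  refine Finset.sum_congr rfl fun d _ => ?_
  rfl

lemma lap_quad (x : V → ℝ) :
    x ⬝ᵥ (G.lapMatrix ℝ *ᵥ x)
      = ∑ e ∈ G.edgeFinset, Sym2.lift ⟨fun a b => (x a - x b)^2,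
          fun a b => by ring_nf⟩ e := by
  have h := G.lapMatrix_toLinearMap₂' (R := ℝ) x
  rw [Matrix.toLinearMap₂'_apply'] at h
  rw [h, ← edge_sum_lift]
  ring
  intro a b; ring

lemma lap_entry (i j : V) : G.lapMatrix ℝ i j
    = (if i = j then (G.degree i : ℝ) else 0) - (if G.Adj i j then 1 else 0) := by
  simp [SimpleGraph.lapMatrix, SimpleGraph.degMatrix, Matrix.diagonal_apply, Matrix.sub_apply]

lemma lap_psd (x : V → ℝ) : 0 ≤ x ⬝ᵥ (G.lapMatrix ℝ *ᵥ x) := by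
  have := (SimpleGraph.posSemidef_lapMatrix ℝ G).dotProduct_mulVec_nonneg x
  simpa using this

lemma lap_sym_dot (x y : V → ℝ) :
    x ⬝ᵥ (G.lapMatrix ℝ *ᵥ y) = y ⬝ᵥ (G.lapMatrix ℝ *ᵥ x) := by
  rw [Matrix.dotProduct_mulVec, ← Matrix.mulVec_transpose,
    (G.isSymm_lapMatrix (R := ℝ)).eq, dotProduct_comm]

lemma lap_cs (x y : V → ℝ) :
    (x ⬝ᵥ (G.lapMatrix ℝ *ᵥ y))^2
      ≤ (x ⬝ᵥ (G.lapMatrix ℝ *ᵥ x)) * (y ⬝ᵥ (G.lapMatrix ℝ *ᵥ y)) := by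
  set L := G.lapMatrix ℝ
  have h : ∀ t : ℝ, 0 ≤ (y ⬝ᵥ (L *ᵥ y)) * (t * t) + (2 * (x ⬝ᵥ (L *ᵥ y))) * t
      + (x ⬝ᵥ (L *ᵥ x)) := by
    intro t
    have h0 := lap_psd G (x + t • y)
    have hexp : (x + t • y) ⬝ᵥ (L *ᵥ (x + t • y))
        = (y ⬝ᵥ (L *ᵥ y)) * (t * t) + (2 * (x ⬝ᵥ (L *ᵥ y))) * t + (x ⬝ᵥ (L *ᵥ x)) := by
      simp only [Matrix.mulVec_add, Matrix.mulVec_smul, add_dotProduct,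
        smul_dotProduct, dotProduct_add, dotProduct_smul,
        smul_eq_mul]
      rw [lap_sym_dot G y x]
      ring
    rw [hexp] at h0
    exact h0
  have hd := discrim_le_zero h
  rw [discrim] at hd
  nlinarith [hd]

lemma ker_const (hG : G.Connected) (x : V → ℝ) (hx : G.lapMatrix ℝ *ᵥ x = 0) :
    ∀ a b : V, x a = x b := by
  have h : Matrix.toLin' (G.lapMatrix ℝ) x = 0 := by
    rw [Matrix.toLin'_apply]; exact hx
  have := (G.lapMatrix_mulVec_eq_zero_iff_forall_reachable (x := x)).mp hx
  exact fun a b => this a b (hG.preconnected a b)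

lemma proj_fix (hG : G.Connected) (B : Matrix V V ℝ)
    (h1 : G.lapMatrix ℝ * B * G.lapMatrix ℝ = G.lapMatrix ℝ)
    (h4 : (B * G.lapMatrix ℝ)ᵀ = B * G.lapMatrix ℝ)
    (x : V → ℝ) (hx : ∑ v, x v = 0) : (B * G.lapMatrix ℝ) *ᵥ x = x := by
  set L := G.lapMatrix ℝ with hLdef
  set y := x - (B * L) *ᵥ x with hy
  have hker : L *ᵥ y = 0 := by
    rw [hy, Matrix.mulVec_sub, Matrix.mulVec_mulVec, ← Matrix.mul_assoc, h1, sub_self]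
  have hconst := ker_const G hG y hker
  have hsum2 : ∑ v, ((B * L) *ᵥ x) v = 0 := by
    have h1' : ∑ v, ((B * L) *ᵥ x) v = (fun _ => (1:ℝ)) ⬝ᵥ ((B * L) *ᵥ x) := by
      simp [dotProduct]
    rw [h1', Matrix.dotProduct_mulVec, ← Matrix.mulVec_transpose, h4,
      ← Matrix.mulVec_mulVec]
    rw [show L *ᵥ (fun _ => (1:ℝ)) = 0 from G.lapMatrix_mulVec_const_eq_zero]
    simp
  have hsumy : ∑ v, y v = 0 := by
    rw [hy]
    simp only [Pi.sub_apply, Finset.sum_sub_distrib, hx, hsum2, sub_zero]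
  have hV : Nonempty V := hG.nonempty
  obtain ⟨v0⟩ := hV
  have hyv : ∀ v, y v = y v0 := fun v => hconst v v0
  have : (Fintype.card V : ℝ) * y v0 = 0 := by
    rw [← hsumy]
    rw [Finset.sum_congr rfl fun v _ => hyv v]
    simp [Finset.card_univ, mul_comm]
  have hy0 : y v0 = 0 := by
    have hcard : (0:ℝ) < Fintype.card V := by
      exact_mod_cast Fintype.card_pos_iff.mpr ⟨v0⟩
    exact (mul_eq_zero.mp this).resolve_left (ne_of_gt hcard)
  have hyz : y = 0 := funext fun v => by rw [hyv v, hy0]; rfl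
  have := sub_eq_zero.mp (hyz : x - (B * L) *ᵥ x = 0)
  exact this.symm

end Graph


noncomputable def dvec {V : Type*} [DecidableEq V] (i j : V) : V → ℝ :=
  Pi.single i 1 - Pi.single j 1

section Dvec
variable {V : Type*} [Fintype V] [DecidableEq V]

lemma dvec_dot (i j : V) (x : V → ℝ) : dvec i j ⬝ᵥ x = x i - x j := by
  simp [dvec, sub_dotProduct, single_dotProduct]

lemma dot_dvec (i j : V) (x : V → ℝ) : x ⬝ᵥ dvec i j = x i - x j := by
  simp [dvec, dotProduct_sub, dotProduct_single]

lemma sum_dvec (i j : V) : ∑ v, dvec i j v = 0 := by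
  simp [dvec, Finset.sum_sub_distrib]

lemma dvec_symm_neg (i j : V) : dvec j i = -dvec i j := by
  simp [dvec]

lemma quadW_symm (W : Matrix V V ℝ) (i j : V) :
    dvec i j ⬝ᵥ (W *ᵥ dvec i j) = dvec j i ⬝ᵥ (W *ᵥ dvec j i) := by
  rw [dvec_symm_neg i j, Matrix.mulVec_neg, dotProduct_neg, neg_dotProduct,
    neg_neg]

lemma quadW_expand (W : Matrix V V ℝ) (i j : V) :
    dvec i j ⬝ᵥ (W *ᵥ dvec i j) = W i i + W j j - W i j - W j i := by
  rw [dvec_dot]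
  simp only [dvec, Matrix.mulVec_sub, Pi.sub_apply, Matrix.mulVec_single_one, Matrix.col_apply, mul_one]
  ring

end Dvec

section Proj
variable {V : Type*} [Fintype V] [DecidableEq V] (G : SimpleGraph V) [DecidableRel G.Adj]

lemma lap_mulVec_pinv (hG : G.Connected) (x : V → ℝ) (hx : ∑ v, x v = 0) :
    G.lapMatrix ℝ *ᵥ (pinv (G.lapMatrix ℝ) *ᵥ x) = x := by
  set L := G.lapMatrix ℝ with hLdef
  have h1 := (pinv_penrose (SimpleGraph.posSemidef_lapMatrix ℝ G).1).1
  have h3 := (pinv_penrose (SimpleGraph.posSemidef_lapMatrix ℝ G).1).2.2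
  have hsym : Lᵀ = L := G.isSymm_lapMatrix (R := ℝ)
  have h1' : L * (pinv L)ᵀ * L = L := by
    have h := congrArg Matrix.transpose h1
    rwa [Matrix.transpose_mul, Matrix.transpose_mul, hsym, ← Matrix.mul_assoc] at h
  have hB'L : (pinv L)ᵀ * L = L * pinv L := by
    calc (pinv L)ᵀ * L = (pinv L)ᵀ * Lᵀ := by rw [hsym]
    _ = (L * pinv L)ᵀ := (Matrix.transpose_mul _ _).symm
    _ = L * pinv L := h3
  have h4' : ((pinv L)ᵀ * L)ᵀ = (pinv L)ᵀ * L := by rw [hB'L, h3]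
  have h := proj_fix G hG ((pinv L)ᵀ) h1' h4' x hx
  rw [hB'L] at h
  rw [Matrix.mulVec_mulVec]
  exact h

lemma pinv_lap_fix (hG : G.Connected) (x : V → ℝ) (hx : ∑ v, x v = 0) :
    (pinv (G.lapMatrix ℝ) * G.lapMatrix ℝ) *ᵥ x = x :=
  proj_fix G hG _ ((pinv_penrose (SimpleGraph.posSemidef_lapMatrix ℝ G).1).1) ((pinv_penrose (SimpleGraph.posSemidef_lapMatrix ℝ G).1).2.1) x hx

lemma trace_pinv_lap (hG : G.Connected) :
    ∑ k, (pinv (G.lapMatrix ℝ) * G.lapMatrix ℝ) k k = (Fintype.card V : ℝ) - 1 := by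
  set L := G.lapMatrix ℝ with hLdef
  set P := pinv L * L with hPdef
  have hne : Nonempty V := hG.nonempty
  have hn0 : (0:ℝ) < (Fintype.card V : ℝ) := by
    exact_mod_cast Fintype.card_pos_iff.mpr hne
  have hPone : P *ᵥ (fun _ => (1:ℝ)) = 0 := by
    rw [hPdef, ← Matrix.mulVec_mulVec,
      show L *ᵥ (fun _ => (1:ℝ)) = 0 from G.lapMatrix_mulVec_const_eq_zero, Matrix.mulVec_zero]
  have hkk : ∀ k : V, P k k = 1 - 1/(Fintype.card V : ℝ) := by
    intro k
    set x0 : V → ℝ := Pi.single k 1 - (fun _ => 1/(Fintype.card V : ℝ)) with hx0def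
    have hx0 : ∑ v, x0 v = 0 := by
      simp only [hx0def, Pi.sub_apply, Finset.sum_sub_distrib]
      rw [Finset.sum_pi_single']
      simp only [Finset.mem_univ, if_true, Finset.sum_const, Finset.card_univ, nsmul_eq_mul]
      field_simp
      norm_num
    have hfix := pinv_lap_fix G hG x0 hx0
    have hdecomp : (Pi.single k 1 : V → ℝ) = x0 + (1/(Fintype.card V : ℝ)) • (fun _ => (1:ℝ)) := by
      funext v
      simp [hx0def]
    have hPk : P *ᵥ (Pi.single k 1 : V → ℝ) = x0 := by
      rw [hdecomp, Matrix.mulVec_add, Matrix.mulVec_smul, hfix, hPone]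
      simp
    have : (P *ᵥ (Pi.single k 1 : V → ℝ)) k = P k k := by
      rw [Matrix.mulVec_single]
      simp
    rw [hPk] at this
    rw [← this]
    simp [hx0def]
  rw [Finset.sum_congr rfl (fun k _ => hkk k)]
  rw [Finset.sum_const, Finset.card_univ, nsmul_eq_mul]
  field_simp

lemma foster (hG : G.Connected) :
    ∑ e ∈ G.edgeFinset, Sym2.lift ⟨fun i j => dvec i j ⬝ᵥ (pinv (G.lapMatrix ℝ) *ᵥ dvec i j),
      fun i j => (quadW_symm _ i j)⟩ e = (Fintype.card V : ℝ) - 1 := by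
  set L := G.lapMatrix ℝ with hLdef
  set W := pinv L with hWdef
  have key := edge_sum_lift G (fun i j => dvec i j ⬝ᵥ (W *ᵥ dvec i j))
    (fun i j => quadW_symm _ i j)
  -- rewrite double sum using quadW_expand
  have hsum1 : ∀ (g : V → ℝ), ∀ i : V, ∑ j, (if G.Adj i j then g i else 0)
      = (G.degree i : ℝ) * g i := by
    intro g i
    rw [G.degree_eq_sum_if_adj (R := ℝ), Finset.sum_mul]
    refine Finset.sum_congr rfl fun j _ => ?_
    split_ifs <;> simp
  have step1 : ∑ i, ∑ j, (if G.Adj i j then (dvec i j ⬝ᵥ (W *ᵥ dvec i j)) else 0)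
      = 2 * (∑ k, (G.degree k : ℝ) * W k k) - 2 * (∑ i, ∑ j, if G.Adj i j then W i j else 0) := by
    have e1 : ∀ i j : V, (if G.Adj i j then (dvec i j ⬝ᵥ (W *ᵥ dvec i j)) else 0)
        = (if G.Adj i j then W i i else 0) + (if G.Adj i j then W j j else 0)
          - (if G.Adj i j then W i j else 0) - (if G.Adj i j then W j i else 0) := by
      intro i j
      split_ifs with h
      · rw [quadW_expand]
      · ring
    simp_rw [e1]
    simp only [Finset.sum_sub_distrib, Finset.sum_add_distrib]
    have hA : ∑ i, ∑ j, (if G.Adj i j then W i i else 0) = ∑ k, (G.degree k : ℝ) * W k k :=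
      Finset.sum_congr rfl fun i _ => hsum1 (fun i => W i i) i
    have hB : ∑ i, ∑ j, (if G.Adj i j then W j j else 0) = ∑ k, (G.degree k : ℝ) * W k k := by
      rw [Finset.sum_comm]
      refine Finset.sum_congr rfl fun j _ => ?_
      rw [Finset.sum_congr rfl fun i (_ : i ∈ Finset.univ) =>
        if_congr (G.adj_comm i j) (rfl : W j j = W j j) rfl]
      exact hsum1 (fun j => W j j) j
    have hD : ∑ i, ∑ j, (if G.Adj i j then W j i else 0)
        = ∑ i, ∑ j, (if G.Adj i j then W i j else 0) := by
      rw [Finset.sum_comm]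
      refine Finset.sum_congr rfl fun j _ => ?_
      exact Finset.sum_congr rfl fun i _ => if_congr (G.adj_comm i j) rfl rfl
    rw [hA, hB, hD]
    ring
  have step2 : ∑ k, (W * L) k k
      = (∑ k, (G.degree k : ℝ) * W k k) - (∑ i, ∑ j, if G.Adj i j then W i j else 0) := by
    have hterm : ∀ k : V, (W * L) k k
        = (G.degree k : ℝ) * W k k - ∑ j, (if G.Adj k j then W k j else 0) := by
      intro k
      rw [Matrix.mul_apply]
      calc ∑ j, W k j * L j k
          = ∑ j, ((if j = k then W k j * (G.degree j : ℝ) else 0)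
              - (if G.Adj j k then W k j else 0)) := by
            refine Finset.sum_congr rfl fun j _ => ?_
            rw [hLdef, lap_entry G j k]
            split_ifs <;> ring
        _ = (G.degree k : ℝ) * W k k - ∑ j, (if G.Adj k j then W k j else 0) := by
            rw [Finset.sum_sub_distrib]
            congr 1
            · rw [Finset.sum_ite_eq' Finset.univ k (fun j => W k j * (G.degree j : ℝ))]
              simp [mul_comm]
            · exact Finset.sum_congr rfl fun j _ => if_congr (G.adj_comm j k) rfl rfl
    rw [Finset.sum_congr rfl fun k _ => hterm k, Finset.sum_sub_distrib]
  have htr : ∑ k, (W * L) k k = (Fintype.card V : ℝ) - 1 := trace_pinv_lap G hG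
  rw [step1] at key
  rw [step2] at htr
  linarith

end Proj

section DvecEval
variable {V : Type*} [DecidableEq V]

lemma dvec_self {a b : V} (h : a ≠ b) : dvec a b a = 1 := by
  simp [dvec, Pi.single_eq_of_ne h, Pi.single_eq_of_ne (Ne.symm h)]

lemma dvec_other {a b : V} (h : a ≠ b) : dvec a b b = -1 := by
  simp [dvec, Pi.single_eq_of_ne h, Pi.single_eq_of_ne (Ne.symm h)]

lemma dvec_ne {a b v : V} (hva : v ≠ a) (hvb : v ≠ b) : dvec a b v = 0 := by
  simp [dvec, Pi.single_eq_of_ne hva, Pi.single_eq_of_ne hvb]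

end DvecEval

noncomputable def rho {V : Type*} [Fintype V] [DecidableEq V] (G : SimpleGraph V)
    [DecidableRel G.Adj] (a b : V) : ℝ :=
  dvec a b ⬝ᵥ (pinv (G.lapMatrix ℝ) *ᵥ dvec a b)

section PerEdge
variable {V : Type*} [Fintype V] [DecidableEq V] {G : SimpleGraph V} [DecidableRel G.Adj]

lemma rho_comm (a b : V) : rho G a b = rho G b a := quadW_symm _ a b

lemma rho_quad (hG : G.Connected) (a b : V) :
    rho G a b = (pinv (G.lapMatrix ℝ) *ᵥ dvec a b)
      ⬝ᵥ (G.lapMatrix ℝ *ᵥ (pinv (G.lapMatrix ℝ) *ᵥ dvec a b)) := by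
  unfold rho
  set u := pinv (G.lapMatrix ℝ) *ᵥ dvec a b with hudef
  have hu : G.lapMatrix ℝ *ᵥ u = dvec a b := lap_mulVec_pinv G hG _ (sum_dvec a b)
  rw [← hu, dotProduct_comm]

lemma rho_ab (hG : G.Connected) (a b : V) :
    (pinv (G.lapMatrix ℝ) *ᵥ dvec a b) a - (pinv (G.lapMatrix ℝ) *ᵥ dvec a b) b
      = rho G a b := by
  rw [← dvec_dot a b]; rfl

lemma rho_pos (hG : G.Connected) {a b : V} (hab : G.Adj a b) : 0 < rho G a b := by
  have hq := rho_quad hG a b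
  set u := pinv (G.lapMatrix ℝ) *ᵥ dvec a b with hudef
  have hu : G.lapMatrix ℝ *ᵥ u = dvec a b := lap_mulVec_pinv G hG _ (sum_dvec a b)
  have hnn : 0 ≤ rho G a b := by rw [hq]; exact lap_psd G u
  rcases hnn.lt_or_eq with h | h
  · exact h
  · exfalso
    have h0 : Matrix.toLinearMap₂' ℝ (G.lapMatrix ℝ) u u = 0 := by
      rw [Matrix.toLinearMap₂'_apply']
      rw [hq] at h
      exact h.symm
    have hcon := (G.lapMatrix_toLinearMap₂'_apply'_eq_zero_iff_forall_reachable u).mp h0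
    have huc : u = (u a) • (fun _ => (1:ℝ)) := by
      funext v
      simp [hcon v a (hG.preconnected v a)]
    have : dvec a b = 0 := by
      rw [← hu, huc, Matrix.mulVec_smul,
        show G.lapMatrix ℝ *ᵥ (fun _ => (1:ℝ)) = 0 from G.lapMatrix_mulVec_const_eq_zero]
      simp
    have h1 : dvec a b a = 1 := dvec_self hab.ne
    rw [this] at h1
    simp at h1

lemma rho_cs (hG : G.Connected) (a b : V) (x : V → ℝ) :
    (x a - x b)^2 ≤ rho G a b * (x ⬝ᵥ (G.lapMatrix ℝ *ᵥ x)) := by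
  set u := pinv (G.lapMatrix ℝ) *ᵥ dvec a b with hudef
  have hu : G.lapMatrix ℝ *ᵥ u = dvec a b := lap_mulVec_pinv G hG _ (sum_dvec a b)
  have hq := rho_quad hG a b
  have hcs := lap_cs G x u
  have hx : x a - x b = x ⬝ᵥ (G.lapMatrix ℝ *ᵥ u) := by
    rw [hu, ← dvec_dot a b x, dotProduct_comm]
  rw [hx]
  calc (x ⬝ᵥ (G.lapMatrix ℝ *ᵥ u))^2
      ≤ (x ⬝ᵥ (G.lapMatrix ℝ *ᵥ x)) * (u ⬝ᵥ (G.lapMatrix ℝ *ᵥ u)) := hcs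
    _ = rho G a b * (x ⬝ᵥ (G.lapMatrix ℝ *ᵥ x)) := by rw [hq]; ring

lemma rho_le_one (hG : G.Connected) {a b : V} (hab : G.Adj a b) : rho G a b ≤ 1 := by
  have hq := rho_quad hG a b
  set u := pinv (G.lapMatrix ℝ) *ᵥ dvec a b with hudef
  have hlq := lap_quad G u
  have hmem : s(a, b) ∈ G.edgeFinset := SimpleGraph.mem_edgeFinset.mpr hab
  have hnn : ∀ e ∈ G.edgeFinset,
      0 ≤ Sym2.lift ⟨fun x y => (u x - u y)^2, fun x y => by ring_nf⟩ e := by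
    intro e _
    induction e using Sym2.ind with
    | _ x y => rw [Sym2.lift_mk]; positivity
  have hsingle : (u a - u b)^2 ≤ ∑ e ∈ G.edgeFinset,
      Sym2.lift ⟨fun x y => (u x - u y)^2, fun x y => by ring_nf⟩ e :=
    Finset.single_le_sum hnn hmem
  have hub : u a - u b = rho G a b := rho_ab hG a b
  rw [hub] at hsingle
  have : rho G a b ^ 2 ≤ rho G a b := by
    nth_rewrite 2 [hq]
    rw [hlq]
    exact hsingle
  nlinarith [rho_pos hG hab]

lemma lap_quadform_dvec {a b : V} (hab : G.Adj a b) :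
    dvec a b ⬝ᵥ (G.lapMatrix ℝ *ᵥ dvec a b) = (G.degree a : ℝ) + G.degree b + 2 := by
  rw [quadW_expand]
  have hne : a ≠ b := hab.ne
  rw [lap_entry G a a, lap_entry G a b, lap_entry G b a, lap_entry G b b]
  simp [hne, Ne.symm hne, hab, G.adj_comm a b, hab.symm, G.irrefl]
  ring

lemma rho_deg (hG : G.Connected) {a b : V} (hab : G.Adj a b) :
    4 ≤ rho G a b * ((G.degree a : ℝ) + G.degree b + 2) := by
  have hcs := rho_cs hG a b (dvec a b)
  rw [dvec_self hab.ne, dvec_other hab.ne, lap_quadform_dvec hab] at hcs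
  nlinarith [hcs]

lemma rho_eq_one_bridge (hG : G.Connected) {a b : V} (hab : G.Adj a b)
    (h1 : rho G a b = 1) : G.IsBridge s(a, b) := by
  rw [SimpleGraph.isBridge_iff]
  intro hre
  set u := pinv (G.lapMatrix ℝ) *ᵥ dvec a b with hudef
  have hq := rho_quad hG a b
  have hlq := lap_quad G u
  set F : Sym2 V → ℝ := Sym2.lift ⟨fun x y => (u x - u y)^2, fun x y => by ring_nf⟩ with hF
  have hub : u a - u b = 1 := by rw [rho_ab hG a b]; exact h1
  have hsum : ∑ e ∈ G.edgeFinset, F e = 1 := by rw [← hlq, ← hq]; exact h1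
  have hmem : s(a, b) ∈ G.edgeFinset := SimpleGraph.mem_edgeFinset.mpr hab
  have hterm : F s(a, b) = 1 := by
    show (u a - u b)^2 = 1
    rw [hub]; norm_num
  have hrest0 : ∑ e ∈ G.edgeFinset.erase s(a, b), F e = 0 := by
    have := Finset.add_sum_erase G.edgeFinset F hmem
    rw [hsum, hterm] at this
    linarith
  have hnn : ∀ e ∈ G.edgeFinset.erase s(a, b), 0 ≤ F e := by
    intro e _
    induction e using Sym2.ind with
    | _ x y =>
      show (0:ℝ) ≤ (u x - u y)^2
      positivity
  have hrest : ∀ e ∈ G.edgeFinset.erase s(a, b), F e = 0 :=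
    (Finset.sum_eq_zero_iff_of_nonneg hnn).mp hrest0
  have hconst : ∀ x y : V, (G \ SimpleGraph.fromEdgeSet {s(a, b)}).Adj x y → u x = u y := by
    intro x y hxy
    rw [SimpleGraph.sdiff_adj] at hxy
    obtain ⟨hadj, hne⟩ := hxy
    have hnotmem : s(x, y) ≠ s(a, b) := by
      intro hcontra
      exact hne ((SimpleGraph.fromEdgeSet_adj _).mpr ⟨by rw [hcontra]; rfl, hadj.ne⟩)
    have h0 := hrest s(x, y) (Finset.mem_erase.mpr ⟨hnotmem, SimpleGraph.mem_edgeFinset.mpr hadj⟩)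
    have h0' : (u x - u y)^2 = 0 := h0
    have := sq_eq_zero_iff.mp h0'
    linarith [this]
  have hwalk : ∀ {x y : V}, (G \ SimpleGraph.fromEdgeSet {s(a, b)}).Walk x y → u x = u y := by
    intro x y w
    induction w with
    | nil => rfl
    | cons h _ ih => exact (hconst _ _ h).trans ih
  obtain ⟨w⟩ := hre
  have := hwalk w
  linarith [hub]

lemma bridge_rho (hG : G.Connected) {a b : V} (hab : G.Adj a b)
    (hb : G.IsBridge s(a, b)) : rho G a b = 1 := by
  classical
  have hnr : ¬ (G \ SimpleGraph.fromEdgeSet {s(a, b)}).Reachable a b := (SimpleGraph.isBridge_iff).mp hb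
  set G' := G \ SimpleGraph.fromEdgeSet {s(a, b)} with hG'
  set χ : V → ℝ := fun v => if G'.Reachable a v then 1 else 0 with hχ
  have hχa : χ a = 1 := by
    show (if G'.Reachable a a then (1:ℝ) else 0) = 1
    rw [if_pos (SimpleGraph.Reachable.refl a)]
  have hχb : χ b = 0 := by
    show (if G'.Reachable a b then (1:ℝ) else 0) = 0
    rw [if_neg hnr]
  have hquad : χ ⬝ᵥ (G.lapMatrix ℝ *ᵥ χ) = 1 := by
    rw [lap_quad G χ]
    rw [Finset.sum_eq_single_of_mem s(a, b) (SimpleGraph.mem_edgeFinset.mpr hab)]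
    · show (χ a - χ b)^2 = 1
      rw [hχa, hχb]; norm_num
    · intro e he hne
      induction e using Sym2.ind with
      | _ x y =>
        have hadj : G.Adj x y := SimpleGraph.mem_edgeFinset.mp he
        have hadj' : G'.Adj x y := by
          rw [hG', SimpleGraph.sdiff_adj]
          refine ⟨hadj, fun hcon => ?_⟩
          rw [SimpleGraph.fromEdgeSet_adj] at hcon
          exact hne (Set.mem_singleton_iff.mp hcon.1)
        have hiff : G'.Reachable a x ↔ G'.Reachable a y :=
          ⟨fun h => h.trans hadj'.reachable, fun h => h.trans hadj'.symm.reachable⟩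
        have hxy : χ x = χ y := by
          show (if G'.Reachable a x then (1:ℝ) else 0) = (if G'.Reachable a y then (1:ℝ) else 0)
          split_ifs with h1 h2 h3
          · rfl
          · exact absurd (hiff.mp h1) h2
          · exact absurd (hiff.mpr h3) h1
          · rfl
        show (χ x - χ y)^2 = 0
        rw [hxy]
        ring
  have hcs := rho_cs hG a b χ
  rw [hχa, hχb, hquad] at hcs
  have hle := rho_le_one hG hab
  have : 1 ≤ rho G a b := by nlinarith [hcs]
  linarith

lemma adj_all_of_deg {v : V} (hdeg : G.degree v + 1 = Fintype.card V) :
    ∀ w, w ≠ v → G.Adj v w := by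
  have hsub : G.neighborFinset v ⊆ Finset.univ.erase v := by
    intro w hw
    exact Finset.mem_erase.mpr ⟨((G.mem_neighborFinset v w).mp hw).ne', Finset.mem_univ _⟩
  have hcard : (Finset.univ.erase v).card = G.degree v := by
    rw [Finset.card_erase_of_mem (Finset.mem_univ v), Finset.card_univ]
    omega
  have heq := Finset.eq_of_subset_of_card_le hsub (le_of_eq hcard)
  intro w hw
  have : w ∈ G.neighborFinset v := by
    rw [heq]
    exact Finset.mem_erase.mpr ⟨hw, Finset.mem_univ _⟩
  exact (G.mem_neighborFinset v w).mp this

lemma rho_top (hG : G.Connected) (hadj : ∀ x y : V, x ≠ y → G.Adj x y)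
    {a b : V} (hab : G.Adj a b) : rho G a b = 2 / (Fintype.card V : ℝ) := by
  have hne : Nonempty V := hG.nonempty
  have hn0 : (0:ℝ) < (Fintype.card V : ℝ) := by
    exact_mod_cast Fintype.card_pos_iff.mpr hne
  have hdegN : ∀ v : V, G.degree v + 1 = Fintype.card V := by
    intro v
    have : G.neighborFinset v = Finset.univ.erase v := by
      ext w
      rw [G.mem_neighborFinset, Finset.mem_erase]
      exact ⟨fun h => ⟨h.ne', Finset.mem_univ _⟩, fun h => hadj v w (Ne.symm h.1)⟩
    rw [SimpleGraph.degree, this, Finset.card_erase_of_mem (Finset.mem_univ v),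
      Finset.card_univ]
    have : 0 < Fintype.card V := Fintype.card_pos_iff.mpr hne
    omega
  have hdeg : ∀ v : V, (G.degree v : ℝ) = (Fintype.card V : ℝ) - 1 := by
    intro v
    have := hdegN v
    have : (G.degree v : ℝ) + 1 = (Fintype.card V : ℝ) := by exact_mod_cast this
    linarith
  have key : G.lapMatrix ℝ *ᵥ dvec a b = (Fintype.card V : ℝ) • dvec a b := by
    funext v
    have hv : (G.lapMatrix ℝ *ᵥ dvec a b) v = G.lapMatrix ℝ v a - G.lapMatrix ℝ v b :=
      dot_dvec a b (G.lapMatrix ℝ v)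
    rw [hv, lap_entry G v a, lap_entry G v b]
    have hsmul : ((Fintype.card V : ℝ) • dvec a b) v = (Fintype.card V : ℝ) * dvec a b v := rfl
    rw [hsmul]
    by_cases hva : v = a
    · subst hva
      rw [dvec_self hab.ne]
      simp [hab.ne, hab, hdeg v]
      try ring
      try linarith [hdeg v]
    · by_cases hvb : v = b
      · subst hvb
        rw [dvec_other hab.ne]
        simp [Ne.symm hab.ne, hab.symm, hdeg v]
        try ring
        try linarith [hdeg v]
      · rw [dvec_ne hva hvb]
        simp [hva, hvb, hadj v a hva, hadj v b hvb]
  set u := pinv (G.lapMatrix ℝ) *ᵥ dvec a b with hudef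
  have hu : G.lapMatrix ℝ *ᵥ u = dvec a b := lap_mulVec_pinv G hG _ (sum_dvec a b)
  set w := u - (1 / (Fintype.card V : ℝ)) • dvec a b with hwdef
  have hw : G.lapMatrix ℝ *ᵥ w = 0 := by
    rw [hwdef, Matrix.mulVec_sub, Matrix.mulVec_smul, hu, key, smul_smul]
    rw [one_div_mul_cancel (ne_of_gt hn0)]
    simp
  have hwconst := ker_const G hG w hw
  have : rho G a b = dvec a b ⬝ᵥ w + (1 / (Fintype.card V : ℝ)) * (dvec a b ⬝ᵥ dvec a b) := by
    unfold rho
    rw [show (pinv (G.lapMatrix ℝ) *ᵥ dvec a b) = w + (1 / (Fintype.card V : ℝ)) • dvec a b by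
      rw [hwdef]; ring_nf; exact hudef.symm]
    rw [dotProduct_add, dotProduct_smul]
    simp [smul_eq_mul]
  rw [this, dvec_dot a b w, hwconst a b, dvec_dot a b (dvec a b),
    dvec_self hab.ne, dvec_other hab.ne]
  field_simp
  norm_num

end PerEdge

set_option maxHeartbeats 1000000 in
theorem stmt16 {V : Type*} [Fintype V] [DecidableEq V] (G : SimpleGraph V) [DecidableRel G.Adj]
    (hG : G.Connected) (n m : ℕ) (hn : n = Fintype.card V) (h3 : 3 ≤ n)
    (hm : m = G.edgeFinset.card) :
    cyclicity G ≤ (n : ℝ) * ((m : ℝ) - n + 1) / 2 ∧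
    (cyclicity G = (n : ℝ) * ((m : ℝ) - n + 1) / 2 ↔ G.IsTree ∨ G = ⊤) := by
  classical
  have hnR : (3:ℝ) ≤ (n:ℝ) := by exact_mod_cast h3
  have hn0 : (0:ℝ) < (n:ℝ) := by linarith
  have hnc : (n:ℝ) = (Fintype.card V : ℝ) := by rw [hn]
  have hmR : (G.edgeFinset.card : ℝ) = (m:ℝ) := by exact_mod_cast hm.symm
  -- bridge resDist to rho
  have hres : ∀ a b : V, resDist G a b = rho G a b := by
    intro a b
    unfold resDist rho dvec
    congr!
  -- lifts
  have pf1 : ∀ a b : V, 1 / rho G a b - 1 = 1 / rho G b a - 1 := fun a b => by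
    rw [rho_comm a b]
  have pf2 : ∀ a b : V, ((n:ℝ)/2) * (1 - rho G a b) = ((n:ℝ)/2) * (1 - rho G b a) :=
    fun a b => by rw [rho_comm a b]
  have pf3 : ∀ a b : V, rho G a b = rho G b a := fun a b => rho_comm a b
  set f1 : Sym2 V → ℝ := Sym2.lift ⟨fun a b => 1 / rho G a b - 1, pf1⟩ with hf1
  set f2 : Sym2 V → ℝ := Sym2.lift ⟨fun a b => ((n:ℝ)/2) * (1 - rho G a b), pf2⟩ with hf2
  set fr : Sym2 V → ℝ := Sym2.lift ⟨fun a b => rho G a b, pf3⟩ with hfrd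
  have hcyc : cyclicity G = ∑ e ∈ G.edgeFinset, f1 e := by
    unfold cyclicity
    refine Finset.sum_congr (by ext e; simp [SimpleGraph.mem_edgeFinset]) fun e _ => ?_
    induction e using Sym2.ind with
    | _ x y =>
      show 1 / resDist G x y - 1 = 1 / rho G x y - 1
      rw [hres]
  have hfoster2 : ∑ e ∈ G.edgeFinset, fr e = (n:ℝ) - 1 := by
    calc ∑ e ∈ G.edgeFinset, fr e
        = ∑ e ∈ G.edgeFinset, Sym2.lift ⟨fun i j =>
            dvec i j ⬝ᵥ (pinv (G.lapMatrix ℝ) *ᵥ dvec i j),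
            fun i j => quadW_symm _ i j⟩ e :=
          Finset.sum_congr rfl (fun e _ => by
            induction e using Sym2.ind with
            | _ x y => rfl)
      _ = (Fintype.card V : ℝ) - 1 := foster G hG
      _ = (n:ℝ) - 1 := by rw [hnc]
  have hf2sum : ∑ e ∈ G.edgeFinset, f2 e = ((n:ℝ)/2) * ((m:ℝ) - ((n:ℝ) - 1)) := by
    have hpt : ∀ e ∈ G.edgeFinset, f2 e = (n:ℝ)/2 - (n:ℝ)/2 * fr e := by
      intro e _
      induction e using Sym2.ind with
      | _ x y =>
        show ((n:ℝ)/2) * (1 - rho G x y) = (n:ℝ)/2 - (n:ℝ)/2 * rho G x y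
        ring
    rw [Finset.sum_congr rfl hpt, Finset.sum_sub_distrib, ← Finset.mul_sum, hfoster2,
      Finset.sum_const, nsmul_eq_mul, hmR]
    ring
  have hdegle : ∀ v : V, (G.degree v : ℝ) ≤ (n:ℝ) - 1 := by
    intro v
    have h := G.degree_lt_card_verts v
    have h' : G.degree v + 1 ≤ Fintype.card V := h
    have : (G.degree v : ℝ) + 1 ≤ (Fintype.card V : ℝ) := by exact_mod_cast h'
    rw [← hnc] at this
    linarith
  have hle : ∀ e ∈ G.edgeFinset, f1 e ≤ f2 e := by
    intro e
    induction e using Sym2.ind with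
    | _ a b =>
      intro he
      have hab : G.Adj a b := SimpleGraph.mem_edgeFinset.mp he
      show 1 / rho G a b - 1 ≤ (n:ℝ)/2 * (1 - rho G a b)
      have hpos := rho_pos hG hab
      have hle1 := rho_le_one hG hab
      have hdeg := rho_deg hG hab
      have h2n : 2 ≤ (n:ℝ) * rho G a b := by
        nlinarith [hdegle a, hdegle b, hpos]
      have hinv : rho G a b * (1 / rho G a b) = 1 := mul_one_div_cancel (ne_of_gt hpos)
      have hy0 : 0 < 1 / rho G a b := one_div_pos.mpr hpos
      have hA : (0:ℝ) ≤ ((n:ℝ) * rho G a b - 2) * (1 / rho G a b) :=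
        mul_nonneg (by linarith) (le_of_lt hy0)
      have hB : (0:ℝ) ≤ (1 - rho G a b) * ((n:ℝ) - 2 * (1 / rho G a b)) := by
        refine mul_nonneg (by linarith) ?_
        nlinarith [hA, hinv]
      nlinarith [hB, hinv]
  -- degree extraction from rho = 2/n
  have hdegs : ∀ x y : V, G.Adj x y → rho G x y = 2/(n:ℝ) →
      G.degree x + 1 = Fintype.card V ∧ G.degree y + 1 = Fintype.card V := by
    intro x y hxy hρ
    have hdeg := rho_deg hG hxy
    rw [hρ] at hdeg
    have hdx := hdegle x
    have hdy := hdegle y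
    have hS : 2*(n:ℝ) ≤ ((G.degree x : ℝ) + (G.degree y : ℝ) + 2) := by
      rw [div_mul_eq_mul_div, le_div_iff₀ hn0] at hdeg
      linarith
    have hx' : (G.degree x : ℝ) = (n:ℝ) - 1 := by linarith
    have hy' : (G.degree y : ℝ) = (n:ℝ) - 1 := by linarith
    constructor
    · have : (G.degree x : ℝ) + 1 = (Fintype.card V : ℝ) := by rw [hx', ← hnc]; ring
      exact_mod_cast this
    · have : (G.degree y : ℝ) + 1 = (Fintype.card V : ℝ) := by rw [hy', ← hnc]; ring
      exact_mod_cast this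
  constructor
  · rw [hcyc]
    calc ∑ e ∈ G.edgeFinset, f1 e ≤ ∑ e ∈ G.edgeFinset, f2 e := Finset.sum_le_sum hle
      _ = ((n:ℝ)/2) * ((m:ℝ) - ((n:ℝ) - 1)) := hf2sum
      _ = (n:ℝ) * ((m:ℝ) - n + 1) / 2 := by ring
  · constructor
    · intro heq
      have hEq : ∑ e ∈ G.edgeFinset, f1 e = ∑ e ∈ G.edgeFinset, f2 e := by
        rw [← hcyc, heq, hf2sum]
        ring
      have hper := (Finset.sum_eq_sum_iff_of_le hle).mp hEq
      have hdich : ∀ a b : V, G.Adj a b → rho G a b = 1 ∨ rho G a b = 2/(n:ℝ) := by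
        intro a b hab
        have h := hper s(a,b) (SimpleGraph.mem_edgeFinset.mpr hab)
        have h' : 1 / rho G a b - 1 = (n:ℝ)/2 * (1 - rho G a b) := h
        have hpos := rho_pos hG hab
        by_cases h1 : rho G a b = 1
        · left; exact h1
        · right
          have hne1 : 1 - rho G a b ≠ 0 := sub_ne_zero.mpr (Ne.symm h1)
          have hid : (1 / rho G a b) * (1 - rho G a b) = 1 / rho G a b - 1 := by
            field_simp
          have hx : (1 / rho G a b) * (1 - rho G a b) = ((n:ℝ)/2) * (1 - rho G a b) := by
            rw [hid, h']
          have hcancel := mul_right_cancel₀ hne1 hx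
          rw [eq_div_iff (ne_of_gt hn0)]
          field_simp at hcancel
          linarith
      by_cases hall : ∀ a b : V, G.Adj a b → rho G a b = 1
      · left
        refine ⟨hG, ?_⟩
        rw [SimpleGraph.isAcyclic_iff_forall_edge_isBridge]
        intro e
        induction e using Sym2.ind with
        | _ a b =>
          intro he
          have hab : G.Adj a b := (SimpleGraph.mem_edgeSet G).mp he
          exact rho_eq_one_bridge hG hab (hall a b hab)
      · right
        push_neg at hall
        obtain ⟨a, b, hab, hne1⟩ := hall
        have h2na : rho G a b = 2/(n:ℝ) := (hdich a b hab).resolve_left hne1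
        obtain ⟨hda, hdb⟩ := hdegs a b hab h2na
        have hfa := adj_all_of_deg hda
        have hfb := adj_all_of_deg hdb
        have hfull : ∀ v : V, ∀ w, w ≠ v → G.Adj v w := by
          intro v
          by_cases hva : v = a
          · subst hva; exact hfa
          by_cases hvb : v = b
          · subst hvb; exact hfb
          have hav : G.Adj a v := hfa v hva
          have hnotbridge : ¬ G.IsBridge s(a, v) := by
            rw [SimpleGraph.isBridge_iff]
            push_neg
            have hab' : (G \ SimpleGraph.fromEdgeSet {s(a,v)}).Adj a b := by
              rw [SimpleGraph.sdiff_adj]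
              refine ⟨hab, fun hc => ?_⟩
              rw [SimpleGraph.fromEdgeSet_adj] at hc
              have hc1 := Set.mem_singleton_iff.mp hc.1
              rw [Sym2.eq_iff] at hc1
              rcases hc1 with ⟨-, hbv⟩ | ⟨hav', -⟩
              · exact hvb hbv.symm
              · exact hva hav'.symm
            have hbv' : (G \ SimpleGraph.fromEdgeSet {s(a,v)}).Adj b v := by
              rw [SimpleGraph.sdiff_adj]
              refine ⟨hfb v hvb, fun hc => ?_⟩
              rw [SimpleGraph.fromEdgeSet_adj] at hc
              have hc1 := Set.mem_singleton_iff.mp hc.1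
              rw [Sym2.eq_iff] at hc1
              rcases hc1 with ⟨hba, -⟩ | ⟨hbv, hva'⟩
              · exact hab.ne' hba
              · exact hva hva'
            exact hab'.reachable.trans hbv'.reachable
          have hρav : rho G a v = 2/(n:ℝ) := by
            rcases hdich a v hav with h1 | h2
            · exact absurd (rho_eq_one_bridge hG hav h1) hnotbridge
            · exact h2
          have := (hdegs a v hav hρav).2
          exact fun w hw => adj_all_of_deg this w hw
        ext x y
        rw [SimpleGraph.top_adj]
        constructor
        · exact fun h => h.ne
        · intro hxy
          exact hfull x y (Ne.symm hxy)
    · rintro (htree | htop)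
      · have hm1 : (m:ℝ) = (n:ℝ) - 1 := by
          have hc := htree.card_edgeFinset
          have : (G.edgeFinset.card : ℝ) + 1 = (Fintype.card V : ℝ) := by exact_mod_cast hc
          rw [hmR, ← hnc] at this
          linarith
        have hzero : ∀ e ∈ G.edgeFinset, f1 e = 0 := by
          intro e
          induction e using Sym2.ind with
          | _ x y =>
            intro he
            have hab : G.Adj x y := SimpleGraph.mem_edgeFinset.mp he
            have hbridge : G.IsBridge s(x,y) :=
              (SimpleGraph.isAcyclic_iff_forall_edge_isBridge.mp htree.IsAcyclic)
                ((SimpleGraph.mem_edgeSet G).mpr hab)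
            have hone := bridge_rho hG hab hbridge
            show 1 / rho G x y - 1 = 0
            rw [hone]
            norm_num
        rw [hcyc, Finset.sum_eq_zero hzero, hm1]
        ring
      · have hadj : ∀ x y : V, x ≠ y → G.Adj x y := by
          intro x y h
          rw [htop]
          exact h
        have hdegN : ∀ v : V, G.degree v + 1 = Fintype.card V := by
          intro v
          have hnb : G.neighborFinset v = Finset.univ.erase v := by
            ext w
            rw [G.mem_neighborFinset, Finset.mem_erase]
            exact ⟨fun h => ⟨h.ne', Finset.mem_univ _⟩, fun h => hadj v w (Ne.symm h.1)⟩
          rw [show G.degree v = (G.neighborFinset v).card from rfl, hnb,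
            Finset.card_erase_of_mem (Finset.mem_univ v), Finset.card_univ]
          have hpos : 0 < Fintype.card V := Fintype.card_pos_iff.mpr hG.nonempty
          omega
        have hdegR : ∀ v : V, (G.degree v : ℝ) = (n:ℝ) - 1 := by
          intro v
          have := hdegN v
          have h' : (G.degree v : ℝ) + 1 = (Fintype.card V : ℝ) := by exact_mod_cast this
          rw [← hnc] at h'
          linarith
        have h2m : (2:ℝ) * (m:ℝ) = (n:ℝ) * ((n:ℝ) - 1) := by
          have hsum := G.sum_degrees_eq_twice_card_edges
          have hsumR : ((∑ v, G.degree v : ℕ) : ℝ) = 2 * (G.edgeFinset.card : ℝ) := by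
            exact_mod_cast hsum
          rw [Nat.cast_sum] at hsumR
          rw [Finset.sum_congr rfl (fun v _ => hdegR v), Finset.sum_const, Finset.card_univ,
            nsmul_eq_mul, ← hnc, hmR] at hsumR
          linarith
        have hall2 : ∀ e ∈ G.edgeFinset, f1 e = (n:ℝ)/2 - 1 := by
          intro e
          induction e using Sym2.ind with
          | _ x y =>
            intro he
            have hab : G.Adj x y := SimpleGraph.mem_edgeFinset.mp he
            have hρ := rho_top hG hadj hab
            rw [← hnc] at hρ
            show 1 / rho G x y - 1 = (n:ℝ)/2 - 1
            rw [hρ]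
            field_simp
        rw [hcyc, Finset.sum_congr rfl hall2, Finset.sum_const, nsmul_eq_mul, hmR]
        nlinarith [h2m]
end

section
/- Let G be a finite connected simple graph on n ≥ 5 vertices whose complement Ḡ is also connected. Then 0 ≤ C(G)·C(Ḡ) < (n(n−1)(n−4)/8)², where the lower bound is attained with equality if and only if G or Ḡ is a tree. -/
open Matrix Finset

set_option linter.unusedSectionVars false
set_option linter.unusedVariables false

section MP
variable {V : Type*} [Fintype V] [DecidableEq V]

lemma penrose_unique (A B C : Matrix V V ℝ)
    (hB : A * B * A = A ∧ B * A * B = B ∧ (A * B)ᵀ = A * B ∧ (B * A)ᵀ = B * A)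
    (hC : A * C * A = A ∧ C * A * C = C ∧ (A * C)ᵀ = A * C ∧ (C * A)ᵀ = C * A) :
    B = C := by
  obtain ⟨b1, b2, b3, b4⟩ := hB
  obtain ⟨c1, c2, c3, c4⟩ := hC
  have hAB : A * B = A * C := by
    calc A * B = (A * B)ᵀ := b3.symm
    _ = Bᵀ * Aᵀ := by rw [Matrix.transpose_mul]
    _ = Bᵀ * (A * C * A)ᵀ := by rw [c1]
    _ = Bᵀ * (Aᵀ * (A * C)ᵀ) := by rw [Matrix.transpose_mul (A * C) A]
    _ = (Bᵀ * Aᵀ) * (A * C) := by rw [c3, Matrix.mul_assoc]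
    _ = (A * B)ᵀ * (A * C) := by rw [Matrix.transpose_mul]
    _ = (A * B) * (A * C) := by rw [b3]
    _ = (A * B * A) * C := by rw [Matrix.mul_assoc, Matrix.mul_assoc, Matrix.mul_assoc]
    _ = A * C := by rw [b1]
  have hBA : B * A = C * A := by
    calc B * A = (B * A)ᵀ := b4.symm
    _ = Aᵀ * Bᵀ := by rw [Matrix.transpose_mul]
    _ = (A * C * A)ᵀ * Bᵀ := by rw [c1]
    _ = ((C * A)ᵀ * Aᵀ) * Bᵀ := by rw [show A * C * A = A * (C * A) from Matrix.mul_assoc _ _ _,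
          Matrix.transpose_mul A (C * A)]
    _ = (C * A) * (Aᵀ * Bᵀ) := by rw [c4, Matrix.mul_assoc]
    _ = (C * A) * (B * A)ᵀ := by rw [Matrix.transpose_mul]
    _ = (C * A) * (B * A) := by rw [b4]
    _ = C * (A * B * A) := by rw [Matrix.mul_assoc, Matrix.mul_assoc]
    _ = C * A := by rw [b1]
  calc B = B * A * B := b2.symm
  _ = B * (A * C) := by rw [Matrix.mul_assoc, hAB]
  _ = (B * A) * C := by rw [Matrix.mul_assoc]
  _ = (C * A) * C := by rw [hBA]
  _ = C := c2

lemma pinv_eq_of (A B : Matrix V V ℝ)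
    (hB : A * B * A = A ∧ B * A * B = B ∧ (A * B)ᵀ = A * B ∧ (B * A)ᵀ = B * A) :
    pinv A = B := by
  unfold pinv
  rw [dif_pos ⟨B, hB⟩]
  exact penrose_unique A _ B (Exists.choose_spec (⟨B, hB⟩ : ∃ B, A * B * A = A ∧ B * A * B = B ∧ (A * B)ᵀ = A * B ∧ (B * A)ᵀ = B * A)) hB

end MP

section LAP
variable {V : Type*} [Fintype V] [DecidableEq V]

def Jmat (V : Type*) [Fintype V] : Matrix V V ℝ := Matrix.of fun _ _ => 1

noncomputable def lapC (G : SimpleGraph V) : Matrix V V ℝ :=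
  letI : DecidableRel G.Adj := Classical.decRel _
  G.lapMatrix ℝ

noncomputable def Mmat (G : SimpleGraph V) : Matrix V V ℝ :=
  lapC G + (Fintype.card V : ℝ)⁻¹ • Jmat V

noncomputable def Hmat (G : SimpleGraph V) : Matrix V V ℝ :=
  (Mmat G)⁻¹ - (Fintype.card V : ℝ)⁻¹ • Jmat V

variable (G : SimpleGraph V)

lemma J_mul_J : Jmat V * Jmat V = (Fintype.card V : ℝ) • Jmat V := by
  ext i j; simp [Jmat, Matrix.mul_apply, Matrix.smul_apply]

lemma lapC_transpose : (lapC G)ᵀ = lapC G := by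
  letI : DecidableRel G.Adj := Classical.decRel _
  exact G.isSymm_lapMatrix (R := ℝ)

lemma lapC_row_sum (i : V) : ∑ j, lapC G i j = 0 := by
  letI : DecidableRel G.Adj := Classical.decRel _
  have := congrFun (G.lapMatrix_mulVec_const_eq_zero (R := ℝ)) i
  simpa [Matrix.mulVec, dotProduct, lapC] using this

lemma lap_mul_J : lapC G * Jmat V = 0 := by
  ext i j
  simp only [Matrix.mul_apply, Jmat, Matrix.of_apply, mul_one, Matrix.zero_apply]
  exact lapC_row_sum G i

lemma J_mul_lap : Jmat V * lapC G = 0 := by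
  have h := congrArg Matrix.transpose (lap_mul_J G)
  rwa [Matrix.transpose_mul, lapC_transpose, Matrix.transpose_zero,
    show (Jmat V)ᵀ = Jmat V from by ext i j; simp [Jmat]] at h

lemma lapC_eq [inst : DecidableRel G.Adj] : lapC G = G.lapMatrix ℝ := by
  unfold lapC; congr!

lemma lapC_quadform [DecidableRel G.Adj] (x : V → ℝ) :
    x ⬝ᵥ lapC G *ᵥ x = (∑ i, ∑ j, if G.Adj i j then (x i - x j)^2 else 0) / 2 := by
  rw [lapC_eq, ← Matrix.toLinearMap₂'_apply']
  exact G.lapMatrix_toLinearMap₂' ℝ x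

lemma lapC_quadform_nonneg (x : V → ℝ) : 0 ≤ x ⬝ᵥ lapC G *ᵥ x := by
  letI : DecidableRel G.Adj := Classical.decRel _
  rw [lapC_quadform]
  apply div_nonneg _ (by norm_num)
  apply Finset.sum_nonneg; intro i _
  apply Finset.sum_nonneg; intro j _
  positivity

lemma J_mulVec (x : V → ℝ) : Jmat V *ᵥ x = fun _ => ∑ a, x a := by
  ext i; simp [Jmat, Matrix.mulVec, dotProduct]

lemma dot_J_mulVec (x : V → ℝ) : x ⬝ᵥ Jmat V *ᵥ x = (∑ a, x a)^2 := by
  rw [J_mulVec]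
  simp [dotProduct, ← Finset.sum_mul, sq]

lemma posDef_M (hG : G.Connected) : (Mmat G).PosDef := by
  letI : DecidableRel G.Adj := Classical.decRel _
  have hne : Nonempty V := hG.nonempty
  have hn : (0:ℝ) < (Fintype.card V : ℝ) := by exact_mod_cast Fintype.card_pos
  refine Matrix.PosDef.of_dotProduct_mulVec_pos ?_ ?_
  · show (Mmat G)ᴴ = Mmat G
    rw [Matrix.conjTranspose_eq_transpose_of_trivial]
    unfold Mmat
    rw [Matrix.transpose_add, Matrix.transpose_smul, lapC_transpose,
      show (Jmat V)ᵀ = Jmat V from by ext i j; simp [Jmat]]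
  · intro x hx
    rw [star_trivial]
    unfold Mmat
    rw [Matrix.add_mulVec, dotProduct_add, Matrix.smul_mulVec,
      dotProduct_smul, dot_J_mulVec, smul_eq_mul]
    have h1 : 0 ≤ x ⬝ᵥ lapC G *ᵥ x := lapC_quadform_nonneg G x
    have h2 : 0 ≤ (Fintype.card V : ℝ)⁻¹ * (∑ a, x a)^2 := by positivity
    rcases h1.lt_or_eq with h | h
    · linarith
    · -- L-part zero: x constant
      have hconst : ∀ i j : V, x i = x j := by
        intro i j
        have hx0 : Matrix.toLinearMap₂' ℝ (G.lapMatrix ℝ) x x = 0 := by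
          rw [Matrix.toLinearMap₂'_apply']
          exact h.symm
        rw [G.lapMatrix_toLinearMap₂'_apply'_eq_zero_iff_forall_reachable] at hx0
        exact hx0 i j (hG.preconnected i j)
      obtain ⟨v⟩ := hne
      have hsum : ∑ a, x a = (Fintype.card V : ℝ) * x v := by
        rw [Finset.sum_congr rfl (fun a _ => hconst a v)]
        simp [mul_comm]
      have hxv : x v ≠ 0 := by
        intro h0
        apply hx
        funext a; rw [hconst a v, h0]; rfl
      have : 0 < (Fintype.card V : ℝ)⁻¹ * (∑ a, x a)^2 := by
        rw [hsum]; positivity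
      linarith
end LAP

section HM
variable {V : Type*} [Fintype V] [DecidableEq V] (G : SimpleGraph V)

lemma Jmat_transpose : (Jmat V)ᵀ = Jmat V := by ext i j; simp [Jmat]

lemma M_transpose : (Mmat G)ᵀ = Mmat G := by
  unfold Mmat
  rw [Matrix.transpose_add, Matrix.transpose_smul, lapC_transpose, Jmat_transpose]

lemma Minv_transpose : ((Mmat G)⁻¹)ᵀ = (Mmat G)⁻¹ := by
  rw [Matrix.transpose_nonsing_inv, M_transpose]

lemma H_transpose : (Hmat G)ᵀ = Hmat G := by
  unfold Hmat
  rw [Matrix.transpose_sub, Matrix.transpose_smul, Minv_transpose, Jmat_transpose]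

lemma M_mul_Minv (hG : G.Connected) : Mmat G * (Mmat G)⁻¹ = 1 :=
  Matrix.mul_nonsing_inv _ (Matrix.isUnit_iff_isUnit_det _ |>.mp (posDef_M G hG).isUnit)

lemma Minv_mul_M (hG : G.Connected) : (Mmat G)⁻¹ * Mmat G = 1 :=
  Matrix.nonsing_inv_mul _ (Matrix.isUnit_iff_isUnit_det _ |>.mp (posDef_M G hG).isUnit)

lemma J_mul_M : Jmat V * Mmat G = Jmat V := by
  unfold Mmat
  rw [Matrix.mul_add, J_mul_lap, Matrix.mul_smul, J_mul_J, zero_add, smul_smul]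
  rcases eq_or_ne (Fintype.card V) 0 with h | h
  · have : IsEmpty V := Fintype.card_eq_zero_iff.mp h
    ext i j; exact (IsEmpty.false i).elim
  · rw [inv_mul_cancel₀ (by exact_mod_cast h), one_smul]

lemma M_mul_J : Mmat G * Jmat V = Jmat V := by
  have h := congrArg Matrix.transpose (J_mul_M G)
  rwa [Matrix.transpose_mul, Jmat_transpose, M_transpose] at h

lemma J_mul_Minv (hG : G.Connected) : Jmat V * (Mmat G)⁻¹ = Jmat V := by
  calc Jmat V * (Mmat G)⁻¹ = (Jmat V * Mmat G) * (Mmat G)⁻¹ := by rw [J_mul_M]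
  _ = Jmat V * (Mmat G * (Mmat G)⁻¹) := by rw [Matrix.mul_assoc]
  _ = Jmat V := by rw [M_mul_Minv G hG, Matrix.mul_one]

lemma Minv_mul_J (hG : G.Connected) : (Mmat G)⁻¹ * Jmat V = Jmat V := by
  calc (Mmat G)⁻¹ * Jmat V = (Mmat G)⁻¹ * (Mmat G * Jmat V) := by rw [M_mul_J]
  _ = ((Mmat G)⁻¹ * Mmat G) * Jmat V := by rw [Matrix.mul_assoc]
  _ = Jmat V := by rw [Minv_mul_M G hG, Matrix.one_mul]

lemma lap_eq_M_sub : lapC G = Mmat G - (Fintype.card V : ℝ)⁻¹ • Jmat V := by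
  unfold Mmat; ring_nf; exact (add_sub_cancel_right _ _).symm

lemma Kmat_smul_ne (hG : G.Connected) : (Fintype.card V : ℝ) ≠ 0 := by
  have : Nonempty V := hG.nonempty
  exact Nat.cast_ne_zero.mpr Fintype.card_ne_zero

lemma M_mul_K (hG : G.Connected) :
    Mmat G * ((Fintype.card V : ℝ)⁻¹ • Jmat V) = (Fintype.card V : ℝ)⁻¹ • Jmat V := by
  rw [Matrix.mul_smul, M_mul_J]

lemma K_mul_Minv (hG : G.Connected) :
    ((Fintype.card V : ℝ)⁻¹ • Jmat V) * (Mmat G)⁻¹ = (Fintype.card V : ℝ)⁻¹ • Jmat V := by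
  rw [Matrix.smul_mul, J_mul_Minv G hG]

lemma K_mul_K (hG : G.Connected) :
    ((Fintype.card V : ℝ)⁻¹ • Jmat V) * ((Fintype.card V : ℝ)⁻¹ • Jmat V)
      = (Fintype.card V : ℝ)⁻¹ • Jmat V := by
  rw [Matrix.smul_mul, Matrix.mul_smul, J_mul_J, smul_smul, smul_smul]
  congr 1
  have h := Kmat_smul_ne G hG
  field_simp

lemma lap_mul_H (hG : G.Connected) :
    lapC G * Hmat G = 1 - (Fintype.card V : ℝ)⁻¹ • Jmat V := by
  unfold Hmat
  rw [lap_eq_M_sub G, Matrix.sub_mul, Matrix.mul_sub, Matrix.mul_sub,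
    M_mul_Minv G hG, M_mul_K G hG, K_mul_Minv G hG, K_mul_K G hG]
  abel


lemma H_mul_lap (hG : G.Connected) :
    Hmat G * lapC G = 1 - (Fintype.card V : ℝ)⁻¹ • Jmat V := by
  have h := congrArg Matrix.transpose (lap_mul_H G hG)
  rwa [Matrix.transpose_mul, H_transpose, lapC_transpose, Matrix.transpose_sub,
    Matrix.transpose_one, Matrix.transpose_smul, Jmat_transpose] at h

lemma K_mul_lap : ((Fintype.card V : ℝ)⁻¹ • Jmat V) * lapC G = 0 := by
  rw [Matrix.smul_mul, J_mul_lap, smul_zero]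

lemma lap_mul_K : lapC G * ((Fintype.card V : ℝ)⁻¹ • Jmat V) = 0 := by
  rw [Matrix.mul_smul, lap_mul_J, smul_zero]

lemma K_mul_H (hG : G.Connected) : ((Fintype.card V : ℝ)⁻¹ • Jmat V) * Hmat G = 0 := by
  unfold Hmat
  rw [Matrix.mul_sub, K_mul_Minv G hG, K_mul_K G hG, sub_self]

lemma penrose_LH (hG : G.Connected) :
    lapC G * Hmat G * lapC G = lapC G ∧ Hmat G * lapC G * Hmat G = Hmat G ∧
    (lapC G * Hmat G)ᵀ = lapC G * Hmat G ∧ (Hmat G * lapC G)ᵀ = Hmat G * lapC G := by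
  have h1 := lap_mul_H G hG
  have h2 := H_mul_lap G hG
  refine ⟨?_, ?_, ?_, ?_⟩
  · rw [h1, Matrix.sub_mul, Matrix.one_mul, K_mul_lap, sub_zero]
  · rw [h2, Matrix.sub_mul, Matrix.one_mul, K_mul_H G hG, sub_zero]
  · rw [h1, Matrix.transpose_sub, Matrix.transpose_one, Matrix.transpose_smul, Jmat_transpose]
  · rw [h2, Matrix.transpose_sub, Matrix.transpose_one, Matrix.transpose_smul, Jmat_transpose]

end HM


section RES
variable {V : Type*} [Fintype V] [DecidableEq V] (G : SimpleGraph V)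

def uvec (i j : V) : V → ℝ := Pi.single i 1 - Pi.single j 1

lemma uvec_apply (i j a : V) : uvec i j a = (if a = i then (1:ℝ) else 0) - (if a = j then 1 else 0) := by
  simp [uvec, Pi.single_apply]

lemma uvec_sum (i j : V) : ∑ a, uvec (V := V) i j a = 0 := by
  simp [uvec, Finset.sum_sub_distrib]

lemma dot_uvec (x : V → ℝ) (i j : V) : x ⬝ᵥ uvec i j = x i - x j := by
  simp [uvec, dotProduct_sub, dotProduct_single]

lemma uvec_dot (x : V → ℝ) (i j : V) : uvec i j ⬝ᵥ x = x i - x j := by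
  simp [uvec, sub_dotProduct, single_dotProduct]

lemma J_mulVec_uvec (i j : V) : Jmat V *ᵥ uvec i j = 0 := by
  rw [J_mulVec]; funext a; rw [uvec_sum]; rfl

lemma K_mulVec_uvec (i j : V) :
    ((Fintype.card V : ℝ)⁻¹ • Jmat V) *ᵥ uvec i j = 0 := by
  rw [Matrix.smul_mulVec, J_mulVec_uvec, smul_zero]

lemma pinv_lapC (hG : G.Connected) : pinv (lapC G) = Hmat G :=
  pinv_eq_of _ _ (penrose_LH G hG)

lemma resDist_eq_H (hG : G.Connected) (i j : V) :
    resDist G i j = uvec i j ⬝ᵥ Hmat G *ᵥ uvec i j := by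
  unfold resDist
  rw [show (Pi.single i 1 - Pi.single j 1 : V → ℝ) = uvec i j from rfl]
  rw [show (letI : DecidableRel G.Adj := Classical.decRel _; pinv (G.lapMatrix ℝ))
      = pinv (lapC G) from rfl]
  rw [pinv_lapC G hG]

lemma resDist_eq_Minv (hG : G.Connected) (i j : V) :
    resDist G i j = uvec i j ⬝ᵥ (Mmat G)⁻¹ *ᵥ uvec i j := by
  rw [resDist_eq_H G hG]
  unfold Hmat
  rw [Matrix.sub_mulVec, K_mulVec_uvec, sub_zero]

lemma uvec_ne_zero {i j : V} (hij : i ≠ j) : uvec (V := V) i j ≠ 0 := by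
  intro h
  have := congrFun h i
  rw [uvec_apply] at this
  simp [hij] at this

lemma resDist_pos (hG : G.Connected) {i j : V} (hij : i ≠ j) : 0 < resDist G i j := by
  rw [resDist_eq_Minv G hG]
  have hpd : ((Mmat G)⁻¹).PosDef := Matrix.posDef_inv_iff.mpr (posDef_M G hG)
  have := hpd.dotProduct_mulVec_pos (uvec_ne_zero hij)
  rwa [star_trivial] at this

end RES

section EDGE
variable {V : Type*} [Fintype V] [DecidableEq V] (G : SimpleGraph V) [DecidableRel G.Adj]

lemma lapC_diag (i : V) : lapC G i i = G.degree i := by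
  rw [lapC_eq]
  simp [SimpleGraph.lapMatrix, SimpleGraph.degMatrix, SimpleGraph.adjMatrix]

lemma lapC_offdiag {i j : V} (hij : i ≠ j) :
    lapC G i j = if G.Adj i j then (-1 : ℝ) else 0 := by
  rw [lapC_eq]
  simp only [SimpleGraph.lapMatrix, Matrix.sub_apply, SimpleGraph.degMatrix,
    Matrix.diagonal_apply_ne _ hij, SimpleGraph.adjMatrix_apply]
  split <;> norm_num

lemma exists_compl_adj (hGc : Gᶜ.Connected) (h2 : 2 ≤ Fintype.card V) (v : V) :
    ∃ w, Gᶜ.Adj v w := by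
  obtain ⟨u, hu⟩ := Fintype.exists_ne_of_one_lt_card (by omega) v
  obtain ⟨p⟩ := hGc.preconnected v u
  cases p with
  | nil => exact absurd rfl hu
  | cons h _ => exact ⟨_, h⟩

lemma degree_le_card (hGc : Gᶜ.Connected) (h2 : 2 ≤ Fintype.card V) (v : V) :
    (G.degree v : ℝ) ≤ (Fintype.card V : ℝ) - 2 := by
  obtain ⟨w, hw⟩ := exists_compl_adj G hGc h2 v
  obtain ⟨hvw, hnadj⟩ := hw
  have hsub : G.neighborFinset v ⊆ Finset.univ \ {v, w} := by
    intro a ha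
    rw [SimpleGraph.mem_neighborFinset] at ha
    simp only [Finset.mem_sdiff, Finset.mem_univ, Finset.mem_insert, Finset.mem_singleton,
      true_and]
    push_neg
    constructor
    · rintro rfl; exact G.irrefl ha
    · rintro rfl; exact hnadj ha
  have hcard : (Finset.univ \ ({v, w} : Finset V)).card = Fintype.card V - 2 := by
    rw [Finset.card_sdiff_of_subset (Finset.subset_univ _), Finset.card_univ,
      Finset.card_insert_of_notMem (by simpa using hvw), Finset.card_singleton]
  have h1 : G.degree v ≤ Fintype.card V - 2 := by
    rw [← SimpleGraph.card_neighborFinset_eq_degree, ← hcard]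
    exact Finset.card_le_card hsub
  have := Nat.cast_le (α := ℝ) |>.mpr h1
  rwa [Nat.cast_sub h2] at this

lemma uvec_dot_uvec (i j : V) (hij : i ≠ j) : uvec (V := V) i j ⬝ᵥ uvec i j = 2 := by
  rw [uvec_dot, uvec_apply, uvec_apply]
  simp [hij, hij.symm]
  norm_num

lemma uvec_M_uvec {i j : V} (hij : i ≠ j) :
    uvec i j ⬝ᵥ Mmat G *ᵥ uvec i j
      = lapC G i i + lapC G j j - lapC G i j - lapC G j i := by
  unfold Mmat
  rw [Matrix.add_mulVec, dotProduct_add, K_mulVec_uvec, dotProduct_zero, add_zero]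
  have : lapC G *ᵥ uvec i j = fun a => lapC G a i - lapC G a j := by
    unfold uvec
    rw [Matrix.mulVec_sub]
    simp only [Matrix.mulVec_single_one]
    rfl
  rw [this, uvec_dot]
  ring

lemma uvec_M_uvec_le (hGc : Gᶜ.Connected) (h2 : 2 ≤ Fintype.card V)
    {i j : V} (hadj : G.Adj i j) :
    uvec i j ⬝ᵥ Mmat G *ᵥ uvec i j ≤ 2 * (Fintype.card V : ℝ) - 2 := by
  have hij := hadj.ne
  rw [uvec_M_uvec G hij, lapC_diag, lapC_diag, lapC_offdiag G hij,
    lapC_offdiag G hij.symm, if_pos hadj, if_pos hadj.symm]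
  have h1 := degree_le_card G hGc h2 i
  have h2' := degree_le_card G hGc h2 j
  linarith

lemma resDist_lower (hG : G.Connected) (hGc : Gᶜ.Connected) (h2 : 2 ≤ Fintype.card V)
    {i j : V} (hadj : G.Adj i j) :
    4 ≤ (2 * (Fintype.card V : ℝ) - 2) * resDist G i j := by
  have hij := hadj.ne
  have hΩ : 0 < resDist G i j := resDist_pos G hG hij
  set Ω := resDist G i j with hΩdef
  set u := uvec (V := V) i j with hu
  set x' := (Mmat G)⁻¹ *ᵥ u with hx'
  have hMx' : Mmat G *ᵥ x' = u := by
    rw [hx', Matrix.mulVec_mulVec, M_mul_Minv G hG, Matrix.one_mulVec]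
  have hq : Ω = u ⬝ᵥ x' := resDist_eq_Minv G hG i j
  have huu : u ⬝ᵥ u = 2 := uvec_dot_uvec i j hij
  have hsym : u ⬝ᵥ Mmat G *ᵥ x' = x' ⬝ᵥ Mmat G *ᵥ u := by
    conv_lhs => rw [Matrix.dotProduct_mulVec u, ← M_transpose G, Matrix.vecMul_transpose]
    rw [dotProduct_comm]
  have hB : x' ⬝ᵥ Mmat G *ᵥ u = 2 := by
    rw [← hsym, hMx', huu]
  have hA : x' ⬝ᵥ u = Ω := by rw [dotProduct_comm, ← hq]
  set q := u ⬝ᵥ Mmat G *ᵥ u with hqdef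
  have hqle : q ≤ 2 * (Fintype.card V : ℝ) - 2 := uvec_M_uvec_le G hGc h2 hadj
  set c : ℝ := 2 / Ω with hcdef
  have hc : c * Ω = 2 := div_mul_cancel₀ _ hΩ.ne' 
  have h0 : 0 ≤ (c • x' - u) ⬝ᵥ Mmat G *ᵥ (c • x' - u) := by
    have := (posDef_M G hG).posSemidef.dotProduct_mulVec_nonneg (c • x' - u)
    rwa [star_trivial] at this
  have hexp : (c • x' - u) ⬝ᵥ Mmat G *ᵥ (c • x' - u) = c * c * Ω - 4 * c + q := by
    rw [Matrix.mulVec_sub, Matrix.mulVec_smul, hMx']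
    simp only [sub_dotProduct, dotProduct_sub, smul_dotProduct,
      dotProduct_smul, smul_eq_mul]
    rw [hA, hB, huu]
    ring
  rw [hexp] at h0
  have h0' : 0 ≤ (c * c * Ω - 4 * c + q) * Ω := mul_nonneg h0 hΩ.le
  have hqΩ : q * Ω ≤ (2 * (Fintype.card V : ℝ) - 2) * Ω :=
    mul_le_mul_of_nonneg_right hqle hΩ.le
  nlinarith [hc, h0', hqΩ]

end EDGE

section BRIDGE
variable {V : Type*} [Fintype V] [DecidableEq V] (G : SimpleGraph V) [DecidableRel G.Adj]

lemma lap_mulVec_Huvec (hG : G.Connected) (i j : V) :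
    lapC G *ᵥ (Hmat G *ᵥ uvec i j) = uvec i j := by
  rw [Matrix.mulVec_mulVec, lap_mul_H G hG, Matrix.sub_mulVec, Matrix.one_mulVec,
    Matrix.smul_mulVec, J_mulVec_uvec, smul_zero, sub_zero]

lemma resDist_eq_xLx (hG : G.Connected) (i j : V) :
    resDist G i j = (Hmat G *ᵥ uvec i j) ⬝ᵥ lapC G *ᵥ (Hmat G *ᵥ uvec i j) := by
  conv_rhs => rw [lap_mulVec_Huvec G hG, dotProduct_comm]
  exact resDist_eq_H G hG i j

lemma resDist_eq_diff (hG : G.Connected) (i j : V) :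
    (Hmat G *ᵥ uvec i j) i - (Hmat G *ᵥ uvec i j) j = resDist G i j := by
  rw [resDist_eq_H G hG, ← uvec_dot (Hmat G *ᵥ uvec i j) i j]

lemma pair_le_double_sum (F : V → V → ℝ) (hF : ∀ a b, 0 ≤ F a b) {i j : V} (hij : i ≠ j) :
    F i j + F j i ≤ ∑ a, ∑ b, F a b := by
  rw [← Finset.sum_product']
  have hpair : ∑ p ∈ ({(i,j),(j,i)} : Finset (V×V)), F p.1 p.2 = F i j + F j i := by
    rw [Finset.sum_pair (by simp [hij])]
  rw [← hpair]
  exact Finset.sum_le_sum_of_subset_of_nonneg (Finset.subset_univ _ |>.trans (by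
    rw [Finset.univ_product_univ])) (fun p _ _ => hF p.1 p.2)

lemma resDist_quad (hG : G.Connected) (i j : V) :
    resDist G i j = (∑ a, ∑ b, if G.Adj a b
      then ((Hmat G *ᵥ uvec i j) a - (Hmat G *ᵥ uvec i j) b)^2 else 0) / 2 := by
  rw [resDist_eq_xLx G hG, lapC_quadform]

lemma resDist_le_one (hG : G.Connected) {i j : V} (hadj : G.Adj i j) :
    resDist G i j ≤ 1 := by
  have hij := hadj.ne
  have hΩ : 0 < resDist G i j := resDist_pos G hG hij
  set x := Hmat G *ᵥ uvec i j with hx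
  have hquad := resDist_quad G hG i j
  have hdiff : x i - x j = resDist G i j := resDist_eq_diff G hG i j
  have hkey := pair_le_double_sum (fun a b => if G.Adj a b then (x a - x b)^2 else 0)
    (fun a b => by positivity) hij
  simp only [if_pos hadj, if_pos hadj.symm] at hkey
  rw [← hx] at hquad
  have h1 : (x i - x j)^2 + (x j - x i)^2 ≤ 2 * resDist G i j := by
    rw [hquad]
    linarith
  rw [hdiff] at h1
  nlinarith [h1, hΩ]

lemma walk_const {G' : SimpleGraph V} {x : V → ℝ}
    (hx : ∀ a b, G'.Adj a b → x a = x b) {a b : V} (p : G'.Walk a b) : x a = x b := by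
  induction p with
  | nil => rfl
  | cons h q ih => rw [hx _ _ h, ih]

lemma resDist_lt_one_of_not_bridge (hG : G.Connected) {i j : V} (hadj : G.Adj i j)
    (hnbr : ¬ G.IsBridge s(i,j)) : resDist G i j < 1 := by
  rcases lt_or_eq_of_le (resDist_le_one G hG hadj) with h | h
  · exact h
  · exfalso
    have hij := hadj.ne
    set x := Hmat G *ᵥ uvec i j with hx
    have hdiff : x i - x j = 1 := by rw [resDist_eq_diff G hG i j, h]
    have hquad := resDist_quad G hG i j
    rw [h, ← hx] at hquad
    set F : V × V → ℝ := fun p => if G.Adj p.1 p.2 then (x p.1 - x p.2)^2 else 0 with hF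
    have hFnn : ∀ p : V × V, 0 ≤ F p := fun p => by
      rw [hF]; dsimp only; positivity
    have hsub : ({(i,j),(j,i)} : Finset (V×V)) ⊆ Finset.univ := Finset.subset_univ _
    have htot : ∑ p ∈ (Finset.univ : Finset (V×V)), F p = 2 := by
      rw [hF, Fintype.sum_prod_type]
      dsimp only
      linarith
    have hpair : ∑ p ∈ ({(i,j),(j,i)} : Finset (V×V)), F p = 2 := by
      rw [Finset.sum_pair (by simp [hij])]
      rw [hF]; dsimp only
      rw [if_pos hadj, if_pos hadj.symm, hdiff]
      have : x j - x i = -1 := by linarith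
      rw [this]; norm_num
    have hrest : ∑ p ∈ Finset.univ \ ({(i,j),(j,i)} : Finset (V×V)), F p = 0 := by
      have := Finset.sum_sdiff hsub (f := F)
      rw [htot, hpair] at this
      linarith
    have hzero : ∀ p ∈ Finset.univ \ ({(i,j),(j,i)} : Finset (V×V)), F p = 0 :=
      (Finset.sum_eq_zero_iff_of_nonneg (fun p _ => hFnn p)).mp hrest
    have hconst : ∀ a b, (G \ SimpleGraph.fromEdgeSet {s(i,j)}).Adj a b → x a = x b := by
      intro a b hab
      rw [SimpleGraph.sdiff_adj, SimpleGraph.fromEdgeSet_adj] at hab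
      obtain ⟨hab1, hab2⟩ := hab
      have hne : s(a,b) ≠ s(i,j) := by
        intro hsym
        exact hab2 ⟨by simpa using hsym, hab1.ne⟩
      have hmem : (a, b) ∈ Finset.univ \ ({(i,j),(j,i)} : Finset (V×V)) := by
        simp only [Finset.mem_sdiff, Finset.mem_univ, true_and, Finset.mem_insert,
          Finset.mem_singleton]
        push_neg
        refine ⟨fun hp => absurd ?_ hne, fun hp => absurd ?_ hne⟩
        · obtain ⟨h1, h2⟩ := Prod.ext_iff.mp hp
          dsimp at h1 h2
          rw [h1, h2]
        · obtain ⟨h1, h2⟩ := Prod.ext_iff.mp hp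
          dsimp at h1 h2
          rw [h1, h2, Sym2.eq_swap]
      have := hzero (a, b) hmem
      rw [hF] at this; dsimp only at this
      rw [if_pos hab1] at this
      have := pow_eq_zero_iff (n := 2) (by norm_num) |>.mp this
      linarith [sub_eq_zero.mp this]
    have hreach : (G \ SimpleGraph.fromEdgeSet {s(i,j)}).Reachable i j := by
      by_contra hnr
      exact hnbr hnr
    obtain ⟨p⟩ := hreach
    have := walk_const hconst p
    rw [this] at hdiff
    simp at hdiff

end BRIDGE

section BRIDGE2
variable {V : Type*} [Fintype V] [DecidableEq V] (G : SimpleGraph V) [DecidableRel G.Adj]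

lemma resDist_eq_one_of_bridge (hG : G.Connected) {i j : V} (hbr : G.IsBridge s(i,j)) :
    resDist G i j = 1 := by
  classical
  have hadj : G.Adj i j := (SimpleGraph.IsBridge.reachable_iff_adj hbr).mp (hG.preconnected i j)
  rw [SimpleGraph.isBridge_iff] at hbr
  have hnr := hbr
  have hij := hadj.ne
  set G' := G \ SimpleGraph.fromEdgeSet {s(i,j)} with hG'
  set x : V → ℝ := fun v => if G'.Reachable i v then 1 else 0 with hxdef
  -- crossing lemma
  have hcross : ∀ a b, G.Adj a b → s(a,b) ≠ s(i,j) → x a = x b := by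
    intro a b hab hne
    have hadj' : G'.Adj a b := by
      rw [hG', SimpleGraph.sdiff_adj, SimpleGraph.fromEdgeSet_adj]
      exact ⟨hab, fun hc => hne (by simpa using hc.1)⟩
    rw [hxdef]
    dsimp only
    by_cases hr : G'.Reachable i a
    · rw [if_pos hr, if_pos (hr.trans hadj'.reachable)]
    · rw [if_neg hr, if_neg (fun hrb => hr (hrb.trans hadj'.symm.reachable))]
  have hxi : x i = 1 := by
    rw [hxdef]; exact if_pos ⟨SimpleGraph.Walk.nil⟩
  have hxj : x j = 0 := by rw [hxdef]; exact if_neg hnr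
  have hxval : ∀ w, G.Adj i w → w ≠ j → x w = 1 := by
    intro w hw hwj
    have : s(i,w) ≠ s(i,j) := fun h => by
      rcases Sym2.eq_iff.mp h with ⟨-, h2⟩ | ⟨h1, -⟩
      · exact hwj h2
      · exact hij h1
    rw [← hcross i w hw this, hxi]
  have hxval' : ∀ w, G.Adj j w → w ≠ i → x w = 0 := by
    intro w hw hwi
    have : s(j,w) ≠ s(i,j) := fun h => by
      rcases Sym2.eq_iff.mp h with ⟨h1, -⟩ | ⟨-, h2⟩
      · exact hij h1.symm
      · exact hwi h2
    rw [← hcross j w hw this, hxj]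
  have hLx : lapC G *ᵥ x = uvec i j := by
    funext v
    rw [lapC_eq]
    rw [SimpleGraph.lapMatrix_mulVec_apply]
    have hdeg : (G.degree v : ℝ) * x v = ∑ u ∈ G.neighborFinset v, x v := by
      rw [Finset.sum_const, ← SimpleGraph.card_neighborFinset_eq_degree, nsmul_eq_mul]
    rw [hdeg, ← Finset.sum_sub_distrib, uvec_apply]
    rcases eq_or_ne v i with rfl | hvi
    · rw [if_pos rfl, if_neg hij]
      have : ∀ w ∈ G.neighborFinset v, x v - x w = if w = j then 1 else 0 := by
        intro w hw
        rw [SimpleGraph.mem_neighborFinset] at hw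
        rcases eq_or_ne w j with rfl | hwj
        · rw [if_pos rfl, hxi, hxj]; ring
        · rw [if_neg hwj, hxi, hxval w hw hwj]; ring
      rw [Finset.sum_congr rfl this, Finset.sum_ite_eq' (G.neighborFinset v) j (fun _ => (1:ℝ)),
        if_pos (by rwa [SimpleGraph.mem_neighborFinset])]
      norm_num
    rcases eq_or_ne v j with rfl | hvj
    · rw [if_neg hvi, if_pos rfl]
      have : ∀ w ∈ G.neighborFinset v, x v - x w = if w = i then -1 else 0 := by
        intro w hw
        rw [SimpleGraph.mem_neighborFinset] at hw
        rcases eq_or_ne w i with rfl | hwi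
        · rw [if_pos rfl, hxi, hxj]; ring
        · rw [if_neg hwi, hxj, hxval' w hw hwi]; ring
      rw [Finset.sum_congr rfl this, Finset.sum_ite_eq' (G.neighborFinset v) i
        (fun _ => (-1:ℝ)), if_pos (by rw [SimpleGraph.mem_neighborFinset]; exact hadj.symm)]
      norm_num
    · rw [if_neg hvi, if_neg hvj, sub_zero]
      apply Finset.sum_eq_zero
      intro w hw
      rw [SimpleGraph.mem_neighborFinset] at hw
      have hne : s(v,w) ≠ s(i,j) := fun h => by
        rcases Sym2.eq_iff.mp h with ⟨h1, -⟩ | ⟨h1, -⟩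
        · exact hvi h1
        · exact hvj h1
      rw [hcross v w hw hne, sub_self]
  -- now compute
  have h1 : resDist G i j = uvec i j ⬝ᵥ x - uvec i j ⬝ᵥ (((Fintype.card V : ℝ)⁻¹ • Jmat V) *ᵥ x) := by
    rw [resDist_eq_H G hG, ← hLx, Matrix.mulVec_mulVec, H_mul_lap G hG, Matrix.sub_mulVec,
      Matrix.one_mulVec, dotProduct_sub]
  have h2 : uvec i j ⬝ᵥ (((Fintype.card V : ℝ)⁻¹ • Jmat V) *ᵥ x) = 0 := by
    rw [Matrix.smul_mulVec, J_mulVec]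
    rw [dotProduct_smul, uvec_dot]
    simp
  rw [h1, h2, uvec_dot, hxi, hxj]
  norm_num

end BRIDGE2

section SUMS
variable {V : Type*} [Fintype V] [DecidableEq V] (G : SimpleGraph V) [DecidableRel G.Adj]

lemma sum_edgeFinset_lift (g : V → V → ℝ) (hg : ∀ a b, g a b = g b a) :
    ∑ e ∈ G.edgeFinset, Sym2.lift ⟨g, hg⟩ e
      = (∑ a, ∑ b, if G.Adj a b then g a b else 0) / 2 := by
  have hmaps : ∀ p ∈ Finset.univ.filter (fun p : V × V => G.Adj p.1 p.2),
      s(p.1, p.2) ∈ G.edgeFinset := by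
    intro p hp
    rw [Finset.mem_filter] at hp
    rw [SimpleGraph.mem_edgeFinset, SimpleGraph.mem_edgeSet]
    exact hp.2
  have hfib := Finset.sum_fiberwise_of_maps_to hmaps (fun p : V × V => g p.1 p.2)
  have hfiber : ∀ e ∈ G.edgeFinset,
      ∑ p ∈ (Finset.univ.filter (fun p : V × V => G.Adj p.1 p.2)).filter
        (fun p => s(p.1, p.2) = e), g p.1 p.2 = 2 * Sym2.lift ⟨g, hg⟩ e := by
    intro e he
    induction e using Sym2.ind with
    | _ a b =>
      rw [SimpleGraph.mem_edgeFinset, SimpleGraph.mem_edgeSet] at he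
      have hab : a ≠ b := he.ne
      have hset : (Finset.univ.filter (fun p : V × V => G.Adj p.1 p.2)).filter
          (fun p => s(p.1, p.2) = s(a, b)) = {(a,b), (b,a)} := by
        ext p
        rw [Finset.mem_filter, Finset.mem_filter]
        simp only [Finset.mem_univ, true_and, Finset.mem_insert, Finset.mem_singleton]
        constructor
        · rintro ⟨-, hp⟩
          rcases Sym2.eq_iff.mp hp with ⟨h1, h2⟩ | ⟨h1, h2⟩
          · left; rw [← h1, ← h2]
          · right; rw [← h1, ← h2]
        · rintro (rfl | rfl)
          · exact ⟨he, rfl⟩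
          · exact ⟨he.symm, Sym2.eq_swap⟩
      rw [hset, Finset.sum_pair (by simp [hab]), Sym2.lift_mk]
      dsimp only
      rw [hg b a]
      ring
  rw [Finset.sum_congr rfl hfiber] at hfib
  have hsum2 : ∑ a, ∑ b, (if G.Adj a b then g a b else 0)
      = ∑ p ∈ Finset.univ.filter (fun p : V × V => G.Adj p.1 p.2), g p.1 p.2 := by
    rw [Finset.sum_filter, Fintype.sum_prod_type]
  rw [hsum2, ← hfib, ← Finset.mul_sum]
  ring

end SUMS

section FOSTER
variable {V : Type*} [Fintype V] [DecidableEq V] (G : SimpleGraph V) [DecidableRel G.Adj]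

lemma resDist_entries (hG : G.Connected) (i j : V) :
    resDist G i j = Hmat G i i + Hmat G j j - Hmat G i j - Hmat G j i := by
  rw [resDist_eq_H G hG]
  have : Hmat G *ᵥ uvec i j = fun a => Hmat G a i - Hmat G a j := by
    unfold uvec
    rw [Matrix.mulVec_sub]
    simp only [Matrix.mulVec_single_one]
    rfl
  rw [this, uvec_dot]
  ring

lemma lapC_apply (a b : V) :
    lapC G a b = (if a = b then (G.degree a : ℝ) else 0) - (if G.Adj a b then 1 else 0) := by
  rcases eq_or_ne a b with rfl | hab
  · rw [lapC_diag, if_pos rfl, if_neg (G.irrefl), sub_zero]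
  · rw [lapC_offdiag G hab, if_neg hab, zero_sub]
    split <;> norm_num

lemma Hmat_symm_apply (a b : V) : Hmat G a b = Hmat G b a := by
  conv_lhs => rw [← H_transpose G]
  rfl

lemma trace_lap_H (hG : G.Connected) :
    Matrix.trace (lapC G * Hmat G) = (Fintype.card V : ℝ) - 1 := by
  rw [lap_mul_H G hG, Matrix.trace_sub, Matrix.trace_one, Matrix.trace_smul]
  have : Matrix.trace (Jmat V) = (Fintype.card V : ℝ) := by
    simp [Matrix.trace, Matrix.diag, Jmat, Finset.card_univ]
  rw [this, smul_eq_mul, inv_mul_cancel₀ (Kmat_smul_ne G hG)]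

lemma foster_double_sum (hG : G.Connected) :
    ∑ a, ∑ b, (if G.Adj a b then resDist G a b else 0)
      = 2 * ((Fintype.card V : ℝ) - 1) := by
  have hterm : ∀ a b : V, (if G.Adj a b then resDist G a b else 0)
      = (if G.Adj a b then Hmat G a a else 0) + (if G.Adj a b then Hmat G b b else 0)
        - 2 * (if G.Adj a b then Hmat G a b else 0) := by
    intro a b
    split
    · rw [resDist_entries G hG, Hmat_symm_apply G b a]; ring
    · ring
  simp_rw [hterm]
  rw [Finset.sum_congr rfl (fun a _ => Finset.sum_sub_distrib _ _),
    Finset.sum_congr rfl (fun a _ => congrArg₂ (· - ·) Finset.sum_add_distrib rfl),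
    Finset.sum_sub_distrib, Finset.sum_add_distrib]
  -- S1
  have hS1 : ∑ a, ∑ b, (if G.Adj a b then Hmat G a a else 0)
      = ∑ a, (G.degree a : ℝ) * Hmat G a a := by
    refine Finset.sum_congr rfl fun a _ => ?_
    rw [G.degree_eq_sum_if_adj (R := ℝ) _, Finset.sum_mul]
    refine Finset.sum_congr rfl fun b _ => ?_
    split <;> simp
  have hS2 : ∑ a, ∑ b, (if G.Adj a b then Hmat G b b else 0)
      = ∑ a, (G.degree a : ℝ) * Hmat G a a := by
    rw [Finset.sum_comm]
    refine Finset.sum_congr rfl fun b _ => ?_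
    rw [G.degree_eq_sum_if_adj (R := ℝ) _, Finset.sum_mul]
    refine Finset.sum_congr rfl fun a _ => ?_
    by_cases h : G.Adj a b
    · rw [if_pos h, if_pos h.symm, one_mul]
    · rw [if_neg h, if_neg (fun hc => h hc.symm), zero_mul]
  have hS3 : ∑ a, ∑ b, (2 : ℝ) * (if G.Adj a b then Hmat G a b else 0)
      = 2 * ∑ a, ∑ b, (if G.Adj a b then Hmat G a b else 0) := by
    rw [Finset.mul_sum]
    exact Finset.sum_congr rfl fun a _ => by rw [Finset.mul_sum]
  rw [hS1, hS2, hS3]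
  -- trace identity
  have hper : ∀ a : V, ∑ b, lapC G a b * Hmat G b a
      = (G.degree a : ℝ) * Hmat G a a - ∑ b, (if G.Adj a b then Hmat G a b else 0) := by
    intro a
    have hpt : ∀ b : V, lapC G a b * Hmat G b a
        = (if a = b then (G.degree a : ℝ) * Hmat G b a else 0)
          - (if G.Adj a b then Hmat G a b else 0) := by
      intro b
      rw [lapC_apply, sub_mul, ite_mul, ite_mul, zero_mul, one_mul, Hmat_symm_apply G b a]
    rw [Finset.sum_congr rfl (fun b _ => hpt b), Finset.sum_sub_distrib,
      Finset.sum_ite_eq Finset.univ a (fun b => (G.degree a : ℝ) * Hmat G b a),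
      if_pos (Finset.mem_univ a)]
  have htr2 : Matrix.trace (lapC G * Hmat G)
      = ∑ a, (G.degree a : ℝ) * Hmat G a a
        - ∑ a, ∑ b, (if G.Adj a b then Hmat G a b else 0) := by
    rw [← Finset.sum_sub_distrib]
    unfold Matrix.trace
    refine Finset.sum_congr rfl fun a _ => ?_
    rw [Matrix.diag_apply, Matrix.mul_apply, hper a]
  have htr3 := trace_lap_H G hG
  rw [htr2] at htr3
  linarith

end FOSTER

noncomputable def slack {V : Type*} [Fintype V] [DecidableEq V] (G : SimpleGraph V) : ℝ :=
  letI : DecidableRel G.Adj := Classical.decRel _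
  ∑ e ∈ G.edgeFinset,
    Sym2.lift ⟨fun i j => 1 - resDist G i j,
      fun i j => by simp only []; rw [resDist_comm G i j]⟩ e

section CYC
variable {V : Type*} [Fintype V] [DecidableEq V] (G : SimpleGraph V)

lemma slack_eq (hG : G.Connected) :
    slack G = (G.edgeSet.ncard : ℝ) - ((Fintype.card V : ℝ) - 1) := by
  letI : DecidableRel G.Adj := Classical.decRel _
  unfold slack
  have h1 : ∀ e ∈ G.edgeFinset, Sym2.lift ⟨fun i j => 1 - resDist G i j,
      fun i j => by simp only []; rw [resDist_comm G i j]⟩ e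
      = 1 - Sym2.lift ⟨fun i j => resDist G i j,
        fun i j => by simp only []; rw [resDist_comm G i j]⟩ e := by
    intro e he
    induction e using Sym2.ind with
    | _ a b => rw [Sym2.lift_mk, Sym2.lift_mk]
  rw [Finset.sum_congr rfl h1, Finset.sum_sub_distrib, Finset.sum_const, nsmul_eq_mul, mul_one]
  have h2 : ∑ e ∈ G.edgeFinset, Sym2.lift ⟨fun i j => resDist G i j,
      fun i j => by simp only []; rw [resDist_comm G i j]⟩ e
      = (Fintype.card V : ℝ) - 1 := by
    rw [sum_edgeFinset_lift G _ _, foster_double_sum G hG]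
    ring
  rw [h2, Set.ncard_eq_toFinset_card' G.edgeSet]
  rfl


lemma slack_nonneg (hG : G.Connected) : 0 ≤ slack G := by
  letI : DecidableRel G.Adj := Classical.decRel _
  unfold slack
  refine Finset.sum_nonneg fun e he => ?_
  induction e using Sym2.ind with
  | _ a b =>
    rw [SimpleGraph.mem_edgeFinset, SimpleGraph.mem_edgeSet] at he
    rw [Sym2.lift_mk]
    have := resDist_le_one G hG he
    dsimp only
    linarith

lemma cyclicity_nonneg (hG : G.Connected) : 0 ≤ cyclicity G := by
  letI : DecidableRel G.Adj := Classical.decRel _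
  unfold cyclicity
  refine Finset.sum_nonneg fun e he => ?_
  induction e using Sym2.ind with
  | _ a b =>
    rw [SimpleGraph.mem_edgeFinset, SimpleGraph.mem_edgeSet] at he
    rw [Sym2.lift_mk]
    have h1 := resDist_le_one G hG he
    have h2 := resDist_pos G hG he.ne
    dsimp only
    have : 1 ≤ 1 / resDist G a b := by
      rw [le_div_iff₀ h2, one_mul]
      exact h1
    linarith

lemma cyclicity_le (hG : G.Connected) (hGc : Gᶜ.Connected) (h2 : 2 ≤ Fintype.card V) :
    cyclicity G ≤ (((Fintype.card V : ℝ) - 1) / 2) * slack G := by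
  letI : DecidableRel G.Adj := Classical.decRel _
  unfold cyclicity slack
  rw [Finset.mul_sum]
  refine Finset.sum_le_sum fun e he => ?_
  induction e using Sym2.ind with
  | _ a b =>
    rw [SimpleGraph.mem_edgeFinset, SimpleGraph.mem_edgeSet] at he
    rw [Sym2.lift_mk, Sym2.lift_mk]
    dsimp only
    have h1 := resDist_le_one G hG he
    have hp := resDist_pos G hG he.ne
    have hlow := resDist_lower G hG hGc h2 he
    set Ω := resDist G a b with hΩ
    have hcancel : 1 / Ω * Ω = 1 := by field_simp
    have hinv : 1 / Ω ≤ ((Fintype.card V : ℝ) - 1) / 2 := by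
      rw [div_le_div_iff₀ hp (by norm_num : (0:ℝ) < 2)]
      nlinarith
    nlinarith [mul_le_mul_of_nonneg_right hinv (by linarith : (0:ℝ) ≤ 1 - Ω)]

lemma cyclicity_eq_zero_iff (hG : G.Connected) : cyclicity G = 0 ↔ G.IsTree := by
  letI : DecidableRel G.Adj := Classical.decRel _
  constructor
  · intro h0
    refine ⟨hG, SimpleGraph.isAcyclic_iff_forall_edge_isBridge.mpr ?_⟩
    intro e he
    unfold cyclicity at h0
    have hnn : ∀ e ∈ G.edgeFinset, 0 ≤ Sym2.lift ⟨fun i j => 1 / resDist G i j - 1,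
        fun i j => by simp only []; rw [resDist_comm G i j]⟩ e := by
      intro e' he'
      induction e' using Sym2.ind with
      | _ a b =>
        rw [SimpleGraph.mem_edgeFinset, SimpleGraph.mem_edgeSet] at he'
        rw [Sym2.lift_mk]
        have h1 := resDist_le_one G hG he'
        have hp := resDist_pos G hG he'.ne
        dsimp only
        have : 1 ≤ 1 / resDist G a b := by
          rw [le_div_iff₀ hp, one_mul]; exact h1
        linarith
    have hall := (Finset.sum_eq_zero_iff_of_nonneg hnn).mp h0
    induction e using Sym2.ind with
    | _ a b =>
      have he' : s(a,b) ∈ G.edgeFinset := by rwa [SimpleGraph.mem_edgeFinset]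
      have hadj : G.Adj a b := by rwa [SimpleGraph.mem_edgeSet] at he
      have hz := hall _ he'
      rw [Sym2.lift_mk] at hz
      dsimp only at hz
      have hp := resDist_pos G hG hadj.ne
      have hΩ1 : resDist G a b = 1 := by
        have : 1 / resDist G a b = 1 := by linarith
        field_simp at this
        linarith
      by_contra hnbr
      have := resDist_lt_one_of_not_bridge G hG hadj hnbr
      rw [hΩ1] at this
      exact lt_irrefl _ this
  · intro htree
    unfold cyclicity
    refine Finset.sum_eq_zero fun e he => ?_
    induction e using Sym2.ind with
    | _ a b =>
      rw [SimpleGraph.mem_edgeFinset, SimpleGraph.mem_edgeSet] at he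
      have hbr : G.IsBridge s(a,b) :=
        SimpleGraph.isAcyclic_iff_forall_edge_isBridge.mp htree.IsAcyclic
          ((SimpleGraph.mem_edgeSet G).mpr he)
      have := resDist_eq_one_of_bridge G hG hbr
      rw [Sym2.lift_mk]
      dsimp only
      rw [this]
      norm_num

lemma card_edge_add_compl :
    (G.edgeSet.ncard : ℝ) + (Gᶜ.edgeSet.ncard : ℝ)
      = (Fintype.card V : ℝ) * ((Fintype.card V : ℝ) - 1) / 2 := by
  classical
  have hdisjS : Disjoint G.edgeSet Gᶜ.edgeSet :=
    SimpleGraph.disjoint_edgeSet.mpr disjoint_compl_right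
  have hunion : (G ⊔ Gᶜ).edgeSet = G.edgeSet ∪ Gᶜ.edgeSet := SimpleGraph.edgeSet_sup G Gᶜ
  have htop : G ⊔ Gᶜ = ⊤ := sup_compl_eq_top
  have h3 : (G ⊔ Gᶜ).edgeSet.ncard = (⊤ : SimpleGraph V).edgeSet.ncard := by rw [htop]
  have h4 : G.edgeSet.ncard + Gᶜ.edgeSet.ncard = (⊤ : SimpleGraph V).edgeSet.ncard := by
    rw [← h3, hunion, Set.ncard_union_eq hdisjS (Set.toFinite _) (Set.toFinite _)]
  have h5 : (⊤ : SimpleGraph V).edgeSet.ncard = (Fintype.card V).choose 2 := by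
    rw [Set.ncard_eq_toFinset_card' ((⊤ : SimpleGraph V).edgeSet)]
    rw [show ((⊤ : SimpleGraph V).edgeSet.toFinset : Finset (Sym2 V))
        = (⊤ : SimpleGraph V).edgeFinset from rfl]
    exact SimpleGraph.card_edgeFinset_top_eq_card_choose_two
  have hcast := congrArg (fun k : ℕ => (k : ℝ)) (h4.trans h5)
  push_cast at hcast
  rw [hcast, Nat.cast_choose_two]

end CYC

theorem stmt19 {V : Type*} [Fintype V] [DecidableEq V] (G : SimpleGraph V)
    (hG : G.Connected) (hGc : Gᶜ.Connected)
    (n : ℕ) (hn : n = Fintype.card V) (h5 : 5 ≤ n) :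
    (0 ≤ cyclicity G * cyclicity Gᶜ ∧
      cyclicity G * cyclicity Gᶜ < ((n : ℝ) * ((n : ℝ) - 1) * ((n : ℝ) - 4) / 8) ^ 2) ∧
    (cyclicity G * cyclicity Gᶜ = 0 ↔ G.IsTree ∨ Gᶜ.IsTree) := by
  subst hn
  have hGcc : Gᶜᶜ = G := compl_compl G
  have hGc2 : Gᶜᶜ.Connected := by rwa [hGcc]
  set N : ℝ := (Fintype.card V : ℝ) with hNdef
  have hN5 : (5:ℝ) ≤ N := by rw [hNdef]; exact_mod_cast h5
  have h2 : 2 ≤ Fintype.card V := by omega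
  have hC0 : 0 ≤ cyclicity G := cyclicity_nonneg G hG
  have hC0' : 0 ≤ cyclicity Gᶜ := cyclicity_nonneg Gᶜ hGc
  have hs0 : 0 ≤ slack G := slack_nonneg G hG
  have hs0' : 0 ≤ slack Gᶜ := slack_nonneg Gᶜ hGc
  have hle : cyclicity G ≤ ((N - 1)/2) * slack G := cyclicity_le G hG hGc h2
  have hle' : cyclicity Gᶜ ≤ ((N - 1)/2) * slack Gᶜ := by
    have := cyclicity_le Gᶜ hGc hGc2 h2
    exact this
  have hsum : slack G + slack Gᶜ = (N - 1) * (N - 4) / 2 := by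
    rw [slack_eq G hG, slack_eq Gᶜ hGc]
    have := card_edge_add_compl G
    rw [← hNdef] at this ⊢
    linarith
  have hk0 : 0 ≤ (N - 1)/2 := by linarith
  have hprod : cyclicity G * cyclicity Gᶜ
      ≤ (((N - 1)/2) * slack G) * (((N - 1)/2) * slack Gᶜ) :=
    mul_le_mul hle hle' hC0' (mul_nonneg hk0 hs0)
  have hsum2 : (slack G + slack Gᶜ)^2 = ((N - 1) * (N - 4) / 2)^2 := by rw [hsum]
  have hAM : slack G * slack Gᶜ ≤ ((N - 1) * (N - 4) / 4)^2 := by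
    nlinarith [sq_nonneg (slack G - slack Gᶜ), hsum2]
  have hP2 : cyclicity G * cyclicity Gᶜ
      ≤ ((N - 1)/2)^2 * (((N - 1) * (N - 4) / 4)^2) := by
    calc cyclicity G * cyclicity Gᶜ
        ≤ (((N - 1)/2) * slack G) * (((N - 1)/2) * slack Gᶜ) := hprod
      _ = ((N - 1)/2)^2 * (slack G * slack Gᶜ) := by ring
      _ ≤ ((N - 1)/2)^2 * (((N - 1) * (N - 4) / 4)^2) :=
          mul_le_mul_of_nonneg_left hAM (by positivity)
  have hpos : 0 < (N - 1) * (N - 4) := by nlinarith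
  have hlast : ((N - 1)/2)^2 * (((N - 1) * (N - 4) / 4)^2)
      < (N * (N - 1) * (N - 4) / 8)^2 := by
    nlinarith [hpos, hN5, mul_pos hpos hpos, sq_nonneg ((N-1)*(N-4))]
  refine ⟨⟨mul_nonneg hC0 hC0', lt_of_le_of_lt hP2 hlast⟩, ?_⟩
  rw [mul_eq_zero]
  constructor
  · rintro (h | h)
    · exact Or.inl ((cyclicity_eq_zero_iff G hG).mp h)
    · exact Or.inr ((cyclicity_eq_zero_iff Gᶜ hGc).mp h)
  · rintro (h | h)
    · exact Or.inl ((cyclicity_eq_zero_iff G hG).mpr h)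
    · exact Or.inr ((cyclicity_eq_zero_iff Gᶜ hGc).mpr h)
end
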